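/- arXiv:1609.04439 — 2 statements merged into one kernel-verified Lean document; each statement's English description precedes it below -/
import Mathlib

section
/- Let m, n ≥ 4. If L' is a regular language with quotient complexity m and L is a left ideal with quotient complexity n (over possibly different alphabets), then κ(L'·L) ≤ m·n + m + n. Moreover, for all m, n ≥ 4 there exist left ideals L' and L, with alphabets satisfying Σ_{L'} \ Σ_L ≠ ∅ and Σ_L \ Σ_{L'} ≠ ∅, of quotient complexities m and n, such that κ(L'·L) = m·n + m + n. -/
/-- The alphabet of a language: letters occurring in some word of `L`. -/
def alphabetOf {α : Type*} (L : Language α) : Set α :=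
  {a | ∃ u v : List α, u ++ [a] ++ v ∈ L}

/-- The left quotient of `L` by a word `w`. -/
def leftQuotient {α : Type*} (L : Language α) (w : List α) : Language α :=
  {x | w ++ x ∈ L}

/-- The set of left quotients of `L` by words over the alphabet of `L`. -/
def quotientSet {α : Type*} (L : Language α) : Set (Language α) :=
  {K | ∃ w : List α, (∀ a ∈ w, a ∈ alphabetOf L) ∧ K = leftQuotient L w}

/-- `L` is regular with quotient complexity `m`: the set of its left quotients
(by words over its own alphabet) is finite of cardinality exactly `m`. -/
def HasComplexity {α : Type*} (L : Language α) (m : ℕ) : Prop :=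
  (quotientSet L).Finite ∧ (quotientSet L).ncard = m

/-- All words whose letters lie in `S`. -/
def starOf {α : Type*} (S : Set α) : Language α :=
  {w | ∀ a ∈ w, a ∈ S}

/-- A nonempty language `L` is a right ideal if `L · Σ_L^* = L`. -/
def IsRightIdeal {α : Type*} (L : Language α) : Prop :=
  (∃ w, w ∈ L) ∧ L * starOf (alphabetOf L) = L

/-- A nonempty language `L` is a left ideal if `Σ_L^* · L = L`. -/
def IsLeftIdeal {α : Type*} (L : Language α) : Prop :=
  (∃ w, w ∈ L) ∧ starOf (alphabetOf L) * L = L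

/-- A nonempty language `L` is a two-sided ideal if `Σ_L^* · L · Σ_L^* = L`. -/
def IsTwoSidedIdeal {α : Type*} (L : Language α) : Prop :=
  (∃ w, w ∈ L) ∧ starOf (alphabetOf L) * L * starOf (alphabetOf L) = L

lemma lang_mem_setOf {α : Type*} {P : List α → Prop} {x : List α} :
    (Membership.mem (γ := Language α) ({y | P y} : Set (List α)) x) = P x := rfl

section Generic
variable {α : Type*}

lemma mem_alphabetOf_of_mem {L : Language α} {w : List α} (hw : w ∈ L) :
    ∀ a ∈ w, a ∈ alphabetOf L := by
  intro a ha
  obtain ⟨s, t, rfl⟩ := List.append_of_mem ha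
  exact ⟨s, t, by simpa using hw⟩

lemma mem_leftQuotient {L : Language α} {w x : List α} :
    x ∈ leftQuotient L w ↔ w ++ x ∈ L := Iff.rfl

lemma leftQuotient_mem_quotientSet_or_zero (L : Language α) (w : List α) :
    leftQuotient L w ∈ quotientSet L ∨ leftQuotient L w = 0 := by
  by_cases h : ∀ a ∈ w, a ∈ alphabetOf L
  · exact Or.inl ⟨w, h, rfl⟩
  · push_neg at h
    right
    obtain ⟨a, ha, hna⟩ := h
    ext x
    simp only [mem_leftQuotient]
    constructor
    · intro hx
      exact absurd (mem_alphabetOf_of_mem hx a (by simp [ha])) hna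
    · intro hx
      exact absurd hx (Language.notMem_zero x)

/-- The union part of the quotient of a product. -/
def SW (L' L : Language α) (w : List α) : Language α :=
  {x | ∃ u v, u ++ v = w ∧ u ∈ L' ∧ v ++ x ∈ L}

lemma leftQuotient_mul (L' L : Language α) (w : List α) :
    leftQuotient (L' * L) w = leftQuotient L' w * L + SW L' L w := by
  ext x
  rw [Language.mem_add, mem_leftQuotient, Language.mem_mul]
  constructor
  · rintro ⟨u', hu', v', hv', he⟩
    rcases List.append_eq_append_iff.1 he with ⟨a', ha1, ha2⟩ | ⟨c', hc1, hc2⟩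
    · exact Or.inr ⟨u', a', ha1.symm, hu', by rw [← ha2]; exact hv'⟩
    · exact Or.inl (Language.mem_mul.2
        ⟨c', by rw [mem_leftQuotient, ← hc1]; exact hu', v', hv', hc2.symm⟩)
  · rintro (hx | hx)
    · rw [Language.mem_mul] at hx
      obtain ⟨c', hc', v', hv', rfl⟩ := hx
      exact ⟨w ++ c', hc', v', hv', by simp⟩
    · obtain ⟨u, v, rfl, hu, hvx⟩ := hx
      exact ⟨u, hu, v ++ x, hvx, by simp⟩

lemma quotient_mono_of_leftIdeal {L : Language α} (hL : IsLeftIdeal L)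
    {t v : List α} (ht : ∀ a ∈ t, a ∈ alphabetOf L) :
    leftQuotient L v ≤ leftQuotient L (t ++ v) := by
  intro x hx
  change v ++ x ∈ L at hx; change t ++ v ++ x ∈ L
  rw [List.append_assoc, ← hL.2]
  exact Language.mem_mul.2 ⟨t, ht, v ++ x, hx, rfl⟩

lemma quotient_nonempty_of_leftIdeal {L : Language α} (hL : IsLeftIdeal L)
    {v : List α} (hv : ∀ a ∈ v, a ∈ alphabetOf L) :
    ∃ x, x ∈ leftQuotient L v := by
  obtain ⟨x, hx⟩ := hL.1
  refine ⟨x, ?_⟩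
  rw [mem_leftQuotient, ← hL.2]
  exact Language.mem_mul.2 ⟨v, hv, x, hx, rfl⟩

lemma nonempty_of_hasComplexity {L : Language α} {m : ℕ} (h : HasComplexity L m)
    (hm : 2 ≤ m) : ∃ w, w ∈ L := by
  by_contra hc
  push_neg at hc
  have hq : quotientSet L = {leftQuotient L []} := by
    apply Set.eq_singleton_iff_unique_mem.2
    refine ⟨⟨[], by simp, rfl⟩, ?_⟩
    rintro K ⟨w, _, rfl⟩
    ext x
    simp only [mem_leftQuotient]
    constructor
    · intro hx; exact absurd hx (hc _)
    · intro hx; exact absurd hx (hc _)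
  obtain ⟨hfin, hcard⟩ := h
  rw [hq, Set.ncard_singleton] at hcard
  omega

end Generic

/-- Part 1 : the general upper bound. -/
theorem part1_bound (m n : ℕ) (hm : 4 ≤ m) (hn : 4 ≤ n)
    (α : Type) (L' L : Language α) (hL' : HasComplexity L' m)
    (hL : IsLeftIdeal L) (hLn : HasComplexity L n) :
    (quotientSet (L' * L)).Finite ∧
      (quotientSet (L' * L)).ncard ≤ m * n + m + n := by
  classical
  set Q1 : Set (Language α) := quotientSet L' ∪ {0} with hQ1
  set Q2 : Set (Language α) := quotientSet L ∪ {0} with hQ2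
  have hQ1fin : Q1.Finite := hL'.1.union (Set.finite_singleton _)
  have hQ2fin : Q2.Finite := hLn.1.union (Set.finite_singleton _)
  obtain ⟨w₀, hw₀⟩ := nonempty_of_hasComplexity hL' (by omega)
  set X₀ : Language α := leftQuotient L' w₀ with hX₀
  have hX₀mem : X₀ ∈ quotientSet L' := ⟨w₀, mem_alphabetOf_of_mem hw₀, rfl⟩
  have hX₀eps : [] ∈ X₀ := by rw [hX₀, mem_leftQuotient]; simpa using hw₀
  set B : Set (Language α × Language α) := (Q1 ×ˢ Q2) \ {(X₀, 0)} with hB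
  have hBfin : B.Finite := ((hQ1fin.prod hQ2fin).diff)
  set f : Language α × Language α → Language α := fun X => X.1 * L + X.2 with hf
  have hsub : quotientSet (L' * L) ⊆ f '' B := by
    rintro K ⟨w, hwa, rfl⟩
    have hX1 : leftQuotient L' w ∈ Q1 := by
      rcases leftQuotient_mem_quotientSet_or_zero L' w with h | h
      · exact Or.inl h
      · exact Or.inr (by simp [h])
    set P : ℕ → Prop := fun i =>
      ∃ v : List α, v.length = i ∧ (∃ u, u ++ v = w ∧ u ∈ L') with hP
    by_cases hV : ∃ i, P i
    · obtain ⟨i, hi⟩ := hV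
      have hib : i ≤ w.length := by
        obtain ⟨v, hv, ⟨u, hu, _⟩⟩ := hi
        rw [← hu, List.length_append] at *
        omega
      obtain ⟨v₀, hv₀len, u₀, hu₀, hu₀'⟩ :=
        Nat.findGreatest_spec (m := i) (n := w.length) hib hi
      -- v₀ is over the alphabet of L, or else its quotient is empty; two subcases
      by_cases hSne : ∃ x, x ∈ SW L' L w
      · -- every split in SW has v over Σ_L, and SW = leftQuotient L v₀'
        -- find a valid split realizing max length among alphabet-good suffixes
        set P' : ℕ → Prop := fun i =>
          ∃ v : List α, v.length = i ∧ (∃ u, u ++ v = w ∧ u ∈ L') ∧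
            ∀ a ∈ v, a ∈ alphabetOf L with hP'
        have hV' : ∃ i, P' i := by
          obtain ⟨x, u, v, huv, hu, hvx⟩ := hSne
          exact ⟨v.length, v, rfl, ⟨u, huv, hu⟩,
            fun a ha => mem_alphabetOf_of_mem hvx a (by simp [ha])⟩
        obtain ⟨i', hi'⟩ := hV'
        have hib' : i' ≤ w.length := by
          obtain ⟨v, hv, ⟨u, hu, _⟩, _⟩ := hi'
          rw [← hu, List.length_append] at *
          omega
        obtain ⟨v₁, hv₁len, ⟨u₁, hu₁, hu₁'⟩, hv₁a⟩ :=
          Nat.findGreatest_spec (m := i') (n := w.length) hib' hi'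
        have hSW : SW L' L w = leftQuotient L v₁ := by
          ext x
          constructor
          · rintro ⟨u, v, huv, hu, hvx⟩
            have hva : ∀ a ∈ v, a ∈ alphabetOf L :=
              fun a ha => mem_alphabetOf_of_mem hvx a (by simp [ha])
            have hvP : P' v.length := ⟨v, rfl, ⟨u, huv, hu⟩, hva⟩
            have hvle : v.length ≤ v₁.length := by
              by_contra hgt
              push_neg at hgt
              rw [hv₁len] at hgt
              exact Nat.findGreatest_is_greatest hgt
                (by rw [← huv, List.length_append]; omega) hvP
            have hsuf : v <:+ v₁ :=
              List.suffix_of_suffix_length_le ⟨u, huv⟩ ⟨u₁, hu₁⟩ hvle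
            obtain ⟨t, rfl⟩ := hsuf
            exact quotient_mono_of_leftIdeal hL
              (fun a ha => hv₁a a (by simp [ha])) hvx
          · intro hx
            exact ⟨u₁, v₁, hu₁, hu₁', hx⟩
        have hYmem : leftQuotient L v₁ ∈ Q2 := Or.inl ⟨v₁, hv₁a, rfl⟩
        have hYne : leftQuotient L v₁ ≠ 0 := by
          obtain ⟨x, hx⟩ := quotient_nonempty_of_leftIdeal hL hv₁a
          intro h
          rw [h] at hx
          exact Language.notMem_zero x hx
        refine ⟨(leftQuotient L' w, leftQuotient L v₁), ⟨⟨hX1, hYmem⟩, ?_⟩, ?_⟩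
        · simp only [Set.mem_singleton_iff, Prod.mk.injEq, not_and]
          intro _; exact hYne
        · rw [hf, leftQuotient_mul L' L w, hSW]
      · -- SW is empty
        have hSW : SW L' L w = 0 := by
          ext x
          constructor
          · intro hx; exact absurd ⟨x, hx⟩ hSne
          · intro hx; exact absurd hx (Language.notMem_zero x)
        have hXne : leftQuotient L' w ≠ X₀ := by
          intro h
          have hwL' : w ∈ L' := by
            have : [] ∈ leftQuotient L' w := h ▸ hX₀eps
            rw [mem_leftQuotient, List.append_nil] at this
            exact this
          -- then ([], w) split shows SW nonempty
          obtain ⟨x, hx⟩ := hL.1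
          exact hSne ⟨x, w, [], by simp, hwL', by
            rw [List.nil_append, ← hL.2]
            exact Language.mem_mul.2 ⟨[], by intro a ha; simp at ha, x, hx, by simp⟩⟩
        refine ⟨(leftQuotient L' w, 0), ⟨⟨hX1, Or.inr rfl⟩, ?_⟩, ?_⟩
        · simp only [Set.mem_singleton_iff, Prod.mk.injEq, not_and]
          intro h; exact absurd h hXne
        · rw [hf, leftQuotient_mul L' L w, hSW]
    · -- no split at all : SW is empty, and also w ∉ L' so X ≠ X₀
      have hSW : SW L' L w = 0 := by
        ext x
        constructor
        · rintro ⟨u, v, huv, hu, hvx⟩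
          exact absurd ⟨v.length, v, rfl, u, huv, hu⟩ hV
        · intro hx; exact absurd hx (Language.notMem_zero x)
      have hXne : leftQuotient L' w ≠ X₀ := by
        intro h
        have hwL' : w ∈ L' := by
          have : [] ∈ leftQuotient L' w := h ▸ hX₀eps
          rw [mem_leftQuotient, List.append_nil] at this
          exact this
        exact hV ⟨0, [], rfl, w, by simp, hwL'⟩
      refine ⟨(leftQuotient L' w, 0), ⟨⟨hX1, Or.inr rfl⟩, ?_⟩, ?_⟩
      · simp only [Set.mem_singleton_iff, Prod.mk.injEq, not_and]
        intro h; exact absurd h hXne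
      · rw [hf, leftQuotient_mul L' L w, hSW]
  have hfin : (quotientSet (L' * L)).Finite := (hBfin.image f).subset hsub
  refine ⟨hfin, ?_⟩
  have h1 : (quotientSet (L' * L)).ncard ≤ (f '' B).ncard :=
    Set.ncard_le_ncard hsub (hBfin.image f)
  have h2 : (f '' B).ncard ≤ B.ncard := Set.ncard_image_le hBfin
  have hmemprod : (X₀, (0 : Language α)) ∈ Q1 ×ˢ Q2 :=
    ⟨Or.inl hX₀mem, Or.inr rfl⟩
  have h3 : B.ncard = (Q1 ×ˢ Q2).ncard - 1 :=
    Set.ncard_diff_singleton_of_mem hmemprod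
  have h4 : (Q1 ×ˢ Q2).ncard = Q1.ncard * Q2.ncard := by
    rw [Set.ncard_eq_toFinset_card _ (hQ1fin.prod hQ2fin), ← Set.Finite.toFinset_prod,
      Finset.card_product, Set.ncard_eq_toFinset_card _ hQ1fin,
      Set.ncard_eq_toFinset_card _ hQ2fin]
  have h5 : Q1.ncard ≤ m + 1 := by
    calc Q1.ncard ≤ (quotientSet L').ncard + ({0} : Set (Language α)).ncard :=
          Set.ncard_union_le _ _
      _ = m + 1 := by rw [hL'.2, Set.ncard_singleton]
  have h6 : Q2.ncard ≤ n + 1 := by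
    calc Q2.ncard ≤ (quotientSet L).ncard + ({0} : Set (Language α)).ncard :=
          Set.ncard_union_le _ _
      _ = n + 1 := by rw [hLn.2, Set.ncard_singleton]
  have h7 : Q1.ncard * Q2.ncard ≤ (m + 1) * (n + 1) := Nat.mul_le_mul h5 h6
  have h8 : (m + 1) * (n + 1) = m * n + m + n + 1 := by ring
  omega
namespace LIP

/-! Letters of `Fin 5`: a = 0 (cycles the L' counter), b = 1 (resets L' to init),
c = 2 (kills L-runs), d = 3 (kills L'), f = 4 (anchors L' counter at 0, pumps L). -/

variable (p q : ℕ)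

/-- States of the DFA for `L'`: `none` = dead (d seen), `some none` = initial N,
`some (some r)` = track state. Accepting : track `-1`. -/
abbrev St1 := Option (Option (ZMod p))

def acc1 : St1 p := some (some (-1))

def d1 : St1 p → Fin 5 → St1 p := fun s l =>
  match s with
  | none => none
  | some t =>
    if l = 3 then none
    else if l = 1 then some none
    else if l = 4 then some (some 0)
    else if l = 0 then
      match t with
      | none => some none
      | some r => some (some (r + 1))
    else some t

def st1 (w : List (Fin 5)) : St1 p := w.foldl (d1 p) (some none)

def L1 : Language (Fin 5) := {w | st1 p w = acc1 p}

lemma d1_dead (l : Fin 5) : d1 p none l = none := rfl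

lemma d1_three (s : St1 p) : d1 p s 3 = none := by
  cases s <;> rfl

lemma foldl_d1_dead (w : List (Fin 5)) : w.foldl (d1 p) none = none := by
  induction w with
  | nil => rfl
  | cons l w ih => simpa [d1_dead] using ih

lemma foldl_d1_live {w : List (Fin 5)} (hw : ∀ a ∈ w, a ≠ 3) (s : Option (ZMod p)) :
    ∃ s', w.foldl (d1 p) (some s) = some s' := by
  induction w generalizing s with
  | nil => exact ⟨s, rfl⟩
  | cons l w ih =>
    have hl : l ≠ 3 := hw l (by simp)
    have hs : ∃ s₁, d1 p (some s) l = some s₁ := by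
      fin_cases l <;> simp_all [d1] <;> cases s <;> simp
    obtain ⟨s₁, hs₁⟩ := hs
    simpa [List.foldl_cons, hs₁] using ih (fun a ha => hw a (by simp [ha])) s₁

/-- synchronization: reading a word that takes the initial state to a track state
takes every live state to the same track state. -/
lemma sync1 {w : List (Fin 5)} {t : ZMod p}
    (h : w.foldl (d1 p) (some none) = some (some t)) (s : Option (ZMod p)) :
    w.foldl (d1 p) (some s) = some (some t) := by
  induction w generalizing s with
  | nil => simp at h
  | cons l w ih =>
    fin_cases l
    · -- l = 0
      simp only [List.foldl_cons] at h ⊢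
      have h0 : d1 p (some none) 0 = some none := rfl
      rw [show ((⟨0, by omega⟩ : Fin 5)) = (0 : Fin 5) from rfl] at *
      rw [h0] at h
      cases s with
      | none => rw [show d1 p (some none) 0 = some none from rfl]; exact ih h none
      | some r => rw [show d1 p (some (some r)) 0 = some (some (r+1)) from rfl]
                  exact ih h _
    · -- l = 1
      simp only [List.foldl_cons] at h ⊢
      rw [show ((⟨1, by omega⟩ : Fin 5)) = (1 : Fin 5) from rfl] at *
      rw [show d1 p (some s) 1 = some none from by cases s <;> rfl]
      rw [show d1 p (some none) 1 = some none from rfl] at h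
      exact h
    · -- l = 2
      simp only [List.foldl_cons] at h ⊢
      rw [show ((⟨2, by omega⟩ : Fin 5)) = (2 : Fin 5) from rfl] at *
      rw [show d1 p (some none) 2 = some none from rfl] at h
      rw [show d1 p (some s) 2 = some s from by cases s <;> rfl]
      exact ih h s
    · -- l = 3
      simp only [List.foldl_cons] at h ⊢
      rw [show ((⟨3, by omega⟩ : Fin 5)) = (3 : Fin 5) from rfl] at *
      rw [d1_three, foldl_d1_dead] at h
      exact absurd h (by simp)
    · -- l = 4
      simp only [List.foldl_cons] at h ⊢
      rw [show ((⟨4, by omega⟩ : Fin 5)) = (4 : Fin 5) from rfl] at *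
      rw [show d1 p (some none) 4 = some (some 0) from rfl] at h
      rw [show d1 p (some s) 4 = some (some 0) from by cases s <;> rfl]
      exact h

end LIP

namespace LIP
variable (p q : ℕ)

lemma d1_zero_tr (r : ZMod p) : d1 p (some (some r)) 0 = some (some (r+1)) := rfl
lemma d1_four (s : Option (ZMod p)) : d1 p (some s) 4 = some (some 0) := by cases s <;> rfl
lemma d1_two (s : Option (ZMod p)) : d1 p (some s) 2 = some s := by cases s <;> rfl
lemma d1_one (s : Option (ZMod p)) : d1 p (some s) 1 = some none := by cases s <;> rfl

lemma run1_a (k : ℕ) : ∀ r : ZMod p,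
    (List.replicate k (0 : Fin 5)).foldl (d1 p) (some (some r)) = some (some (r + k)) := by
  induction k with
  | zero => intro r; simp
  | succ k ih =>
    intro r
    rw [List.replicate_succ, List.foldl_cons, d1_zero_tr, ih (r+1)]
    congr 1
    push_cast
    ring

lemma run1_N (k : ℕ) :
    (List.replicate k (0 : Fin 5)).foldl (d1 p) (some none) = some none := by
  induction k with
  | zero => simp
  | succ k ih => rw [List.replicate_succ, List.foldl_cons]; exact ih

lemma cast_pred [NeZero p] (hp : 2 ≤ p) : ((p - 1 : ℕ) : ZMod p) = -1 := by
  have h1 : (1:ℕ) ≤ p := by omega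
  push_cast [Nat.cast_sub h1]
  rw [ZMod.natCast_self]
  ring

/-- the basic accepted word of L1 -/
lemma memL1_from_live [NeZero p] (hp : 2 ≤ p) (s : Option (ZMod p)) :
    ((4 : Fin 5) :: List.replicate (p-1) (0 : Fin 5)).foldl (d1 p) (some s) = acc1 p := by
  rw [List.foldl_cons, d1_four, run1_a]
  rw [show ((0:ZMod p) + (p-1:ℕ)) = ((p-1:ℕ) : ZMod p) from by ring, cast_pred p hp, acc1]

lemma w0_mem_L1 [NeZero p] (hp : 2 ≤ p) :
    (4 : Fin 5) :: List.replicate (p-1) (0 : Fin 5) ∈ L1 p := memL1_from_live p hp none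

lemma mem_L1_no_three {w : List (Fin 5)} (hw : w ∈ L1 p) : ∀ a ∈ w, a ≠ 3 := by
  intro a ha h3
  subst h3
  obtain ⟨s, t, rfl⟩ := List.append_of_mem ha
  have : st1 p (s ++ 3 :: t) = none := by
    rw [st1, List.foldl_append, List.foldl_cons, d1_three, foldl_d1_dead]
  rw [L1, lang_mem_setOf, this, acc1] at hw
  simp at hw

end LIP
namespace LIP
variable (p q : ℕ)

def Sig1 : Set (Fin 5) := {0, 1, 2, 4}

lemma alphabetOf_L1 [NeZero p] (hp : 2 ≤ p) : alphabetOf (L1 p) = Sig1 := by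
  ext a
  constructor
  · rintro ⟨u, v, huv⟩
    have ha3 : a ≠ 3 := mem_L1_no_three p huv a (by simp)
    rw [Sig1]
    fin_cases a <;> simp_all <;> exact absurd rfl ha3
  · intro ha
    have hrep : List.replicate (p-1) (0:Fin 5) = 0 :: List.replicate (p-2) 0 := by
      rw [show p - 1 = (p-2) + 1 by omega, List.replicate_succ]
    rw [Sig1] at ha
    simp only [Set.mem_insert_iff, Set.mem_singleton_iff] at ha
    rcases ha with rfl | rfl | rfl | rfl
    · -- a = 0
      refine ⟨[4], List.replicate (p-2) 0, ?_⟩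
      have : ([ (4:Fin 5)] ++ [0] ++ List.replicate (p-2) 0) =
          (4:Fin 5) :: List.replicate (p-1) 0 := by
        rw [hrep]; rfl
      rw [this]; exact w0_mem_L1 p hp
    · -- a = 1
      refine ⟨[], (4:Fin 5) :: List.replicate (p-1) 0, ?_⟩
      show st1 p _ = acc1 p
      rw [st1, show ([] ++ [(1:Fin 5)] ++ (4:Fin 5) :: List.replicate (p-1) 0)
        = (1:Fin 5) :: ((4:Fin 5) :: List.replicate (p-1) 0) from rfl,
        List.foldl_cons, d1_one]
      exact memL1_from_live p hp none
    · -- a = 2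
      refine ⟨[4], List.replicate (p-1) 0, ?_⟩
      show st1 p _ = acc1 p
      rw [st1, show ([(4:Fin 5)] ++ [(2:Fin 5)] ++ List.replicate (p-1) 0)
        = (4:Fin 5) :: (2:Fin 5) :: List.replicate (p-1) 0 from rfl,
        List.foldl_cons, List.foldl_cons, d1_four, d1_two, run1_a]
      rw [show ((0:ZMod p) + (p-1:ℕ)) = ((p-1:ℕ) : ZMod p) from by ring, cast_pred p hp, acc1]
    · -- a = 4
      exact ⟨[], List.replicate (p-1) 0, w0_mem_L1 p hp⟩

lemma isLeftIdeal_L1 [NeZero p] (hp : 2 ≤ p) : IsLeftIdeal (L1 p) := by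
  refine ⟨⟨_, w0_mem_L1 p hp⟩, ?_⟩
  ext w
  rw [Language.mem_mul]
  constructor
  · rintro ⟨u, hu, v, hv, rfl⟩
    have hu3 : ∀ a ∈ u, a ≠ 3 := by
      intro a ha
      have := hu a ha
      rw [alphabetOf_L1 p hp, Sig1] at this
      simp only [Set.mem_insert_iff, Set.mem_singleton_iff] at this
      rcases this with rfl | rfl | rfl | rfl <;> decide
    obtain ⟨s, hs⟩ := foldl_d1_live p hu3 none
    show st1 p (u ++ v) = acc1 p
    rw [st1, List.foldl_append]
    rw [show List.foldl (d1 p) (some none) u = st1 p u from rfl, st1, hs]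
    exact sync1 p hv s
  · intro hw
    exact ⟨[], by intro a ha; simp at ha, w, hw, rfl⟩

def Lang1 (s : St1 p) : Language (Fin 5) := {x | x.foldl (d1 p) s = acc1 p}

lemma leftQuotient_L1 (w : List (Fin 5)) :
    leftQuotient (L1 p) w = Lang1 p (st1 p w) := by
  ext x
  rw [mem_leftQuotient]
  show st1 p (w ++ x) = acc1 p ↔ _
  rw [st1, List.foldl_append]
  rfl

lemma natCast_val_zmod [NeZero p] (r : ZMod p) : ((r.val : ℕ) : ZMod p) = r :=
  ZMod.natCast_rightInverse r

/-- distinguishing words for L1 states -/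
lemma lang1_tr_iff [NeZero p] (r r' : ZMod p) :
    List.replicate ((-1 - r).val) (0:Fin 5) ∈ Lang1 p (some (some r')) ↔ r' = r := by
  rw [Lang1, lang_mem_setOf, run1_a, natCast_val_zmod, acc1]
  constructor
  · intro h
    have := Option.some_injective _ (Option.some_injective _ h)
    have h2 : r' + (-1 - r) = r + (-1 - r) := by rw [this]; ring
    exact add_right_cancel h2
  · rintro rfl; congr 1; push_cast; ring

lemma lang1_N_notmem (r : ZMod p) :
    List.replicate ((-1 - r).val) (0:Fin 5) ∉ Lang1 p (some none) := by
  rw [Lang1, lang_mem_setOf, run1_N, acc1]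
  simp

lemma hasComplexity_L1 [NeZero p] (hp : 2 ≤ p) : HasComplexity (L1 p) (p + 1) := by
  have hQ : quotientSet (L1 p) =
      insert (Lang1 p (some none)) ((fun r : ZMod p => Lang1 p (some (some r))) '' Set.univ) := by
    ext K
    constructor
    · rintro ⟨w, hwa, rfl⟩
      have hw3 : ∀ a ∈ w, a ≠ 3 := by
        intro a ha
        have := hwa a ha
        rw [alphabetOf_L1 p hp, Sig1] at this
        simp only [Set.mem_insert_iff, Set.mem_singleton_iff] at this
        rcases this with rfl | rfl | rfl | rfl <;> decide
      obtain ⟨s, hs⟩ := foldl_d1_live p hw3 none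
      rw [leftQuotient_L1, st1, hs]
      cases s with
      | none => exact Set.mem_insert _ _
      | some r => exact Set.mem_insert_of_mem _ ⟨r, trivial, rfl⟩
    · intro hK
      rcases Set.mem_insert_iff.1 hK with rfl | ⟨r, _, rfl⟩
      · exact ⟨[], by simp, by rw [leftQuotient_L1]; rfl⟩
      · refine ⟨(4:Fin 5) :: List.replicate r.val 0, ?_, ?_⟩
        · intro a ha
          rw [alphabetOf_L1 p hp, Sig1]
          simp only [List.mem_cons, List.mem_replicate] at ha
          rcases ha with rfl | ⟨_, rfl⟩ <;> simp [Sig1]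
        · rw [leftQuotient_L1, st1, List.foldl_cons, d1_four, run1_a, zero_add,
            natCast_val_zmod]
  rw [HasComplexity, hQ]
  have hinj : Set.InjOn (fun r : ZMod p => Lang1 p (some (some r))) Set.univ := by
    intro r _ r' _ h
    simp only at h
    have h1 : List.replicate ((-1 - r').val) (0:Fin 5) ∈ Lang1 p (some (some r')) :=
      (lang1_tr_iff p r' r').2 rfl
    rw [← h] at h1
    exact (lang1_tr_iff p r' r).1 h1
  have hfin2 : ((fun r : ZMod p => Lang1 p (some (some r))) '' Set.univ).Finite :=
    Set.finite_univ.image _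
  have hnotmem : Lang1 p (some none) ∉
      ((fun r : ZMod p => Lang1 p (some (some r))) '' Set.univ) := by
    rintro ⟨r, _, hr⟩
    replace hr : Lang1 p (some (some r)) = Lang1 p (some none) := hr
    have h1 : List.replicate ((-1 - r).val) (0:Fin 5) ∈ Lang1 p (some (some r)) :=
      (lang1_tr_iff p r r).2 rfl
    rw [hr] at h1
    exact lang1_N_notmem p r h1
  constructor
  · exact hfin2.insert _
  · rw [Set.ncard_insert_of_notMem hnotmem hfin2,
      Set.ncard_image_of_injOn hinj, Set.ncard_univ, Nat.card_zmod]

end LIP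
namespace LIP
variable (q : ℕ)

/-- States for `L`: `none` = dead (c seen), `some j` = min(#f's, q). Accept at `q`. -/
abbrev St2 (q : ℕ) := Option (Fin (q+1))

def bump (j : Fin (q+1)) : Fin (q+1) := ⟨min (j.val + 1) q, by omega⟩

def d2 : St2 q → Fin 5 → St2 q := fun o l =>
  match o with
  | none => none
  | some j => if l = 2 then none else if l = 4 then some (bump q j) else some j

def fin0 : Fin (q+1) := ⟨0, by omega⟩
def ftop : Fin (q+1) := ⟨q, by omega⟩

def st2 (w : List (Fin 5)) : St2 q := w.foldl (d2 q) (some (fin0 q))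

def L2 : Language (Fin 5) := {w | st2 q w = some (ftop q)}

lemma d2_dead (l : Fin 5) : d2 q none l = none := rfl
lemma d2_two (o : St2 q) : d2 q o 2 = none := by cases o <;> rfl
lemma d2_four (j : Fin (q+1)) : d2 q (some j) 4 = some (bump q j) := rfl
lemma d2_other (j : Fin (q+1)) {l : Fin 5} (h2 : l ≠ 2) (h4 : l ≠ 4) :
    d2 q (some j) l = some j := by
  rw [d2]; simp [h2, h4]

lemma foldl_d2_dead (w : List (Fin 5)) : w.foldl (d2 q) none = none := by
  induction w with
  | nil => rfl
  | cons l w ih => simpa [d2_dead] using ih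

lemma run2_f (k : ℕ) : ∀ j : Fin (q+1),
    (List.replicate k (4:Fin 5)).foldl (d2 q) (some j) = some ⟨min (j.val + k) q, by omega⟩ := by
  induction k with
  | zero =>
    intro j
    rw [List.replicate_zero, List.foldl_nil]
    congr 1
    rw [Fin.ext_iff]
    show j.val = min (j.val + 0) q
    have := j.isLt
    omega
  | succ k ih =>
    intro j
    rw [List.replicate_succ, List.foldl_cons, d2_four, ih (bump q j)]
    congr 1
    rw [Fin.ext_iff]
    show min (min (j.val + 1) q + k) q = min (j.val + (k+1)) q
    omega

lemma foldl_d2_live {w : List (Fin 5)} (hw : ∀ a ∈ w, a ≠ 2) (j : Fin (q+1)) :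
    ∃ j', w.foldl (d2 q) (some j) = some j' := by
  induction w generalizing j with
  | nil => exact ⟨j, rfl⟩
  | cons l w ih =>
    have hl : l ≠ 2 := hw l (by simp)
    by_cases h4 : l = 4
    · subst h4
      rw [List.foldl_cons, d2_four]
      exact ih (fun a ha => hw a (by simp [ha])) _
    · rw [List.foldl_cons, d2_other q j hl h4]
      exact ih (fun a ha => hw a (by simp [ha])) j

lemma mono2 {w : List (Fin 5)} : ∀ {j j' : Fin (q+1)}, j.val ≤ j'.val →
    ∀ {t : Fin (q+1)}, w.foldl (d2 q) (some j) = some t →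
    ∃ t', w.foldl (d2 q) (some j') = some t' ∧ t.val ≤ t'.val := by
  induction w with
  | nil =>
    intro j j' hle t ht
    rw [List.foldl_nil] at ht ⊢
    obtain rfl := Option.some_injective _ ht
    exact ⟨j', rfl, hle⟩
  | cons l w ih =>
    intro j j' hle t ht
    rw [List.foldl_cons] at ht ⊢
    by_cases h2 : l = 2
    · subst h2; rw [d2_two, foldl_d2_dead] at ht; simp at ht
    by_cases h4 : l = 4
    · subst h4
      rw [d2_four] at ht ⊢
      have hb : (bump q j).val ≤ (bump q j').val := by
        rw [bump, bump]; simp; omega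
      exact ih hb ht
    · rw [d2_other q j h2 h4] at ht
      rw [d2_other q j' h2 h4]
      exact ih hle ht

lemma mem_L2_no_two {w : List (Fin 5)} (hw : w ∈ L2 q) : ∀ a ∈ w, a ≠ 2 := by
  intro a ha h2
  subst h2
  obtain ⟨s, t, rfl⟩ := List.append_of_mem ha
  have : st2 q (s ++ 2 :: t) = none := by
    rw [st2, List.foldl_append, List.foldl_cons, d2_two, foldl_d2_dead]
  rw [L2, lang_mem_setOf, this] at hw
  simp at hw

lemma repq_mem_L2 : List.replicate q (4:Fin 5) ∈ L2 q := by
  show st2 q _ = some (ftop q)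
  rw [st2, run2_f]
  congr 1
  rw [Fin.ext_iff, fin0, ftop]
  show min (0 + q) q = q
  omega

def Sig2 : Set (Fin 5) := {0, 1, 3, 4}

lemma cons_mem_L2 (hq : 1 ≤ q) {l : Fin 5} (h2 : l ≠ 2) (h4 : l ≠ 4) :
    l :: List.replicate q (4:Fin 5) ∈ L2 q := by
  show st2 q _ = some (ftop q)
  rw [st2, List.foldl_cons, d2_other q _ h2 h4, run2_f]
  congr 1
  rw [Fin.ext_iff, fin0, ftop]
  show min (0 + q) q = q
  omega

lemma alphabetOf_L2 (hq : 1 ≤ q) : alphabetOf (L2 q) = Sig2 := by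
  ext a
  constructor
  · rintro ⟨u, v, huv⟩
    have ha2 : a ≠ 2 := mem_L2_no_two q huv a (by simp)
    rw [Sig2]
    fin_cases a <;> simp_all <;> exact absurd rfl ha2
  · intro ha
    rw [Sig2] at ha
    simp only [Set.mem_insert_iff, Set.mem_singleton_iff] at ha
    have hgen : ∀ l : Fin 5, l ≠ 2 → l ≠ 4 → a = l → a ∈ alphabetOf (L2 q) := by
      rintro l h2 h4 rfl
      exact ⟨[], List.replicate q 4, by simpa using cons_mem_L2 q hq h2 h4⟩
    rcases ha with rfl | rfl | rfl | rfl
    · exact hgen 0 (by decide) (by decide) rfl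
    · exact hgen 1 (by decide) (by decide) rfl
    · exact hgen 3 (by decide) (by decide) rfl
    · -- a = 4
      refine ⟨[], List.replicate (q-1) 4, ?_⟩
      have : ([] ++ [(4:Fin 5)] ++ List.replicate (q-1) 4) = List.replicate q (4:Fin 5) := by
        rw [show q = (q-1)+1 by omega, List.replicate_succ]
        simp
      rw [this]
      exact repq_mem_L2 q

lemma isLeftIdeal_L2 (hq : 1 ≤ q) : IsLeftIdeal (L2 q) := by
  refine ⟨⟨_, repq_mem_L2 q⟩, ?_⟩
  ext w
  rw [Language.mem_mul]
  constructor
  · rintro ⟨u, hu, v, hv, rfl⟩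
    have hu2 : ∀ a ∈ u, a ≠ 2 := by
      intro a ha
      have := hu a ha
      rw [alphabetOf_L2 q hq, Sig2] at this
      simp only [Set.mem_insert_iff, Set.mem_singleton_iff] at this
      rcases this with rfl | rfl | rfl | rfl <;> decide
    obtain ⟨j, hj⟩ := foldl_d2_live q hu2 (fin0 q)
    show st2 q (u ++ v) = some (ftop q)
    rw [st2, List.foldl_append,
      show List.foldl (d2 q) (some (fin0 q)) u = some j from hj]
    have hv' : List.foldl (d2 q) (some (fin0 q)) v = some (ftop q) := hv
    obtain ⟨t', ht', htop⟩ := mono2 q (j := fin0 q) (j' := j) (by simp [fin0]) hv'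
    rw [ht']
    congr 1
    rw [Fin.ext_iff]
    have : t'.val ≤ q := by omega
    rw [ftop] at htop ⊢
    simp at htop ⊢
    omega
  · intro hw
    exact ⟨[], by intro a ha; simp at ha, w, hw, rfl⟩

def Lang2 (o : St2 q) : Language (Fin 5) := {x | x.foldl (d2 q) o = some (ftop q)}

lemma leftQuotient_L2 (w : List (Fin 5)) :
    leftQuotient (L2 q) w = Lang2 q (st2 q w) := by
  ext x
  rw [mem_leftQuotient]
  show st2 q (w ++ x) = some (ftop q) ↔ _
  rw [st2, List.foldl_append]
  rfl

lemma lang2_iff (j j' : Fin (q+1)) :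
    List.replicate (q - j.val) (4:Fin 5) ∈ Lang2 q (some j') ↔ j.val ≤ j'.val := by
  rw [Lang2, lang_mem_setOf, run2_f]
  rw [Option.some_inj, Fin.ext_iff, ftop]
  show min (j'.val + (q - j.val)) q = q ↔ _
  have := j.isLt
  have := j'.isLt
  omega

lemma hasComplexity_L2 (hq : 1 ≤ q) : HasComplexity (L2 q) (q + 1) := by
  have hQ : quotientSet (L2 q) =
      (fun j : Fin (q+1) => Lang2 q (some j)) '' Set.univ := by
    ext K
    constructor
    · rintro ⟨w, hwa, rfl⟩
      have hw2 : ∀ a ∈ w, a ≠ 2 := by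
        intro a ha
        have := hwa a ha
        rw [alphabetOf_L2 q hq, Sig2] at this
        simp only [Set.mem_insert_iff, Set.mem_singleton_iff] at this
        rcases this with rfl | rfl | rfl | rfl <;> decide
      obtain ⟨j, hj⟩ := foldl_d2_live q hw2 (fin0 q)
      rw [leftQuotient_L2, st2, hj]
      exact ⟨j, trivial, rfl⟩
    · rintro ⟨j, _, rfl⟩
      refine ⟨List.replicate j.val 4, ?_, ?_⟩
      · intro a ha
        rw [alphabetOf_L2 q hq, Sig2]
        simp only [List.mem_replicate] at ha
        simp [ha.2]
      · show Lang2 q (some j) = _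
        rw [leftQuotient_L2, st2, run2_f]
        have hjj : (⟨min ((fin0 q).val + j.val) q, by omega⟩ : Fin (q+1)) = j := by
          rw [Fin.ext_iff]
          show min (0 + j.val) q = j.val
          have := j.isLt
          omega
        rw [hjj]
  rw [HasComplexity, hQ]
  have hinj : Set.InjOn (fun j : Fin (q+1) => Lang2 q (some j)) Set.univ := by
    intro j _ j' _ h
    replace h : Lang2 q (some j) = Lang2 q (some j') := h
    have h1 := (lang2_iff q j j).2 le_rfl
    rw [h] at h1
    have h2 := (lang2_iff q j' j').2 le_rfl
    rw [← h] at h2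
    have := (lang2_iff q j j').1 h1
    have := (lang2_iff q j' j).1 h2
    exact Fin.ext (by omega)
  constructor
  · exact Set.finite_univ.image _
  · rw [Set.ncard_image_of_injOn hinj, Set.ncard_univ, Nat.card_eq_fintype_card,
      Fintype.card_fin]

end LIP
namespace LIP
variable (p q : ℕ)

lemma ne_acc1_none : (none : St1 p) ≠ acc1 p := by simp [acc1]
lemma ne_acc1_N : (some none : St1 p) ≠ acc1 p := by simp [acc1]
lemma tr_eq_acc1_iff (r : ZMod p) : (some (some r) : St1 p) = acc1 p ↔ r = -1 := by
  simp [acc1]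

lemma zero_ne_neg_one [NeZero p] (hp : 2 ≤ p) : (0 : ZMod p) ≠ -1 := by
  intro h
  rw [← cast_pred p hp] at h
  have h2 := congrArg ZMod.val h
  rw [ZMod.val_cast_of_lt (by omega : p - 1 < p)] at h2
  rw [ZMod.val_zero] at h2
  omega

lemma cast_ne_neg_one [NeZero p] (hp : 2 ≤ p) {i : ℕ} (hi : i < p - 1) :
    (i : ZMod p) ≠ -1 := by
  intro h
  rw [← cast_pred p hp] at h
  have h2 := congrArg ZMod.val h
  rw [ZMod.val_cast_of_lt (by omega : i < p),
    ZMod.val_cast_of_lt (by omega : p - 1 < p)] at h2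
  omega

/-- product automaton -/
def dP : St1 p × St2 q → Fin 5 → St1 p × St2 q := fun σ l =>
  (d1 p σ.1 l,
    if d1 p σ.1 l = acc1 p then some ((d2 q σ.2 l).getD (fin0 q)) else d2 q σ.2 l)

def stP (w : List (Fin 5)) : St1 p × St2 q := w.foldl (dP p q) (some none, none)

def LangP (σ : St1 p × St2 q) : Language (Fin 5) :=
  {x | (x.foldl (dP p q) σ).2 = some (ftop q)}

lemma foldP_fst (w : List (Fin 5)) : ∀ σ : St1 p × St2 q,
    (w.foldl (dP p q) σ).1 = w.foldl (d1 p) σ.1 := by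
  induction w with
  | nil => intro σ; rfl
  | cons l w ih => intro σ; rw [List.foldl_cons, List.foldl_cons, ih]; rfl

lemma stP_fst (w : List (Fin 5)) : (stP p q w).1 = st1 p w := foldP_fst p q w _

lemma dP_snd_acc {σ : St1 p × St2 q} {l : Fin 5} (h : d1 p σ.1 l = acc1 p) :
    (dP p q σ l).2 = some ((d2 q σ.2 l).getD (fin0 q)) := by
  rw [dP]; simp [h]

lemma dP_snd_nonacc {σ : St1 p × St2 q} {l : Fin 5} (h : d1 p σ.1 l ≠ acc1 p) :
    (dP p q σ l).2 = d2 q σ.2 l := by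
  rw [dP]; simp [h]

/-- invariant: accepting L'-state forces a live run. -/
lemma invP (w : List (Fin 5)) (h : (stP p q w).1 = acc1 p) :
    ∃ j, (stP p q w).2 = some j := by
  induction w using List.reverseRecOn with
  | nil =>
    rw [stP] at h
    exact absurd h (ne_acc1_N p)
  | append_singleton w l _ =>
    rw [stP, List.foldl_append, List.foldl_cons, List.foldl_nil] at h ⊢
    have h1 : d1 p ((w.foldl (dP p q) (some none, none)) : St1 p × St2 q).1 l = acc1 p := h
    rw [dP_snd_acc p q h1]
    exact ⟨_, rfl⟩

/-- order transfer relation on run states -/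
def ole (o o' : St2 q) : Prop :=
  ∀ j, o = some j → ∃ j', o' = some j' ∧ j.val ≤ j'.val

lemma d2_some_inv {o : St2 q} {l : Fin 5} {j : Fin (q+1)} (h : d2 q o l = some j) :
    ∃ j0, o = some j0 := by
  cases o with
  | none => rw [d2_dead] at h; exact absurd h (by simp)
  | some j0 => exact ⟨j0, rfl⟩

lemma ole_step {o o' : St2 q} (h : ole q o o') (l : Fin 5) :
    ole q (d2 q o l) (d2 q o' l) := by
  intro j hj
  obtain ⟨j0, rfl⟩ := d2_some_inv q hj
  obtain ⟨j0', rfl, hle⟩ := h j0 rfl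
  by_cases h2 : l = 2
  · subst h2; rw [d2_two] at hj; exact absurd hj (by simp)
  by_cases h4 : l = 4
  · subst h4
    rw [d2_four] at hj ⊢
    obtain rfl := Option.some_injective _ hj
    exact ⟨_, rfl, by rw [bump, bump]; simp; omega⟩
  · rw [d2_other q _ h2 h4] at hj ⊢
    obtain rfl := Option.some_injective _ hj
    exact ⟨_, rfl, hle⟩

lemma ole_stepP {o : St2 q} {σ : St1 p × St2 q} (h : ole q o σ.2) (l : Fin 5) :
    ole q (d2 q o l) ((dP p q σ l).2) := by
  by_cases hacc : d1 p σ.1 l = acc1 p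
  · rw [dP_snd_acc p q hacc]
    intro j hj
    obtain ⟨j', hj', hle⟩ := ole_step q h l j hj
    rw [hj']
    exact ⟨j', rfl, hle⟩
  · rw [dP_snd_nonacc p q hacc]
    exact ole_step q h l

lemma ole_fold (v : List (Fin 5)) : ∀ (σ : St1 p × St2 q) (o : St2 q),
    ole q o σ.2 → ole q (v.foldl (d2 q) o) ((v.foldl (dP p q) σ).2) := by
  induction v with
  | nil => intro σ o h; exact h
  | cons l v ih =>
    intro σ o h
    rw [List.foldl_cons, List.foldl_cons]
    exact ih (dP p q σ l) (d2 q o l) (ole_stepP p q h l)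

lemma Adir {u v : List (Fin 5)} (hu : u ∈ L1 p) (hv : v ∈ L2 q) :
    (stP p q (u ++ v)).2 = some (ftop q) := by
  rw [stP, List.foldl_append]
  have h1 : (stP p q u).1 = acc1 p := by rw [stP_fst]; exact hu
  obtain ⟨j, hj⟩ := invP p q u h1
  have hole : ole q (some (fin0 q)) (stP p q u).2 := by
    intro j0 hj0
    obtain rfl := Option.some_injective _ hj0
    exact ⟨j, hj, by rw [fin0]; simp⟩
  have h2 := ole_fold p q v (stP p q u) (some (fin0 q)) hole (ftop q) hv
  obtain ⟨j', hj', hle⟩ := h2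
  show (v.foldl (dP p q) (stP p q u)).2 = some (ftop q)
  rw [hj']
  have hto : j' = ftop q := by
    have h3 := j'.isLt
    have hle' : q ≤ j'.val := hle
    refine Fin.ext ?_
    show j'.val = q
    omega
  rw [hto]

lemma Bdir (w : List (Fin 5)) : ∀ j, (stP p q w).2 = some j →
    ∃ u v, u ++ v = w ∧ u ∈ L1 p ∧ v.foldl (d2 q) (some (fin0 q)) = some j := by
  induction w using List.reverseRecOn with
  | nil =>
    intro j hj
    rw [stP] at hj
    exact absurd hj (by simp)
  | append_singleton w l ih =>
    intro j hj
    rw [stP, List.foldl_append, List.foldl_cons, List.foldl_nil] at hj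
    set σ := w.foldl (dP p q) (some none, none) with hσ
    by_cases hacc : d1 p σ.1 l = acc1 p
    · rw [dP_snd_acc p q hacc] at hj
      obtain rfl := Option.some_injective _ hj
      cases ho : d2 q σ.2 l with
      | none =>
        refine ⟨w ++ [l], [], by simp, ?_, by simp⟩
        show st1 p (w ++ [l]) = acc1 p
        rw [st1, List.foldl_append, List.foldl_cons, List.foldl_nil]
        have h2 : w.foldl (d1 p) (some none) = σ.1 :=
          (foldP_fst p q w ((some none, none) : St1 p × St2 q)).symm
        rw [h2]
        exact hacc
      | some j1 =>
        obtain ⟨j0, hj0⟩ := d2_some_inv q ho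
        obtain ⟨u, v, rfl, hu, hv⟩ := ih j0 (by rw [stP, ← hσ]; exact hj0)
        refine ⟨u, v ++ [l], by rw [List.append_assoc], hu, ?_⟩
        rw [List.foldl_append, hv, List.foldl_cons, List.foldl_nil, ← hj0, ho]
        simp
    · rw [dP_snd_nonacc p q hacc] at hj
      obtain ⟨j0, hj0⟩ := d2_some_inv q hj
      obtain ⟨u, v, rfl, hu, hv⟩ := ih j0 (by rw [stP, ← hσ]; exact hj0)
      refine ⟨u, v ++ [l], by rw [List.append_assoc], hu, ?_⟩
      rw [List.foldl_append, hv, List.foldl_cons, List.foldl_nil, ← hj0]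
      exact hj

lemma prod_lang_eq : L1 p * L2 q = {w | (stP p q w).2 = some (ftop q)} := by
  ext w
  rw [Language.mem_mul]
  constructor
  · rintro ⟨u, hu, v, hv, rfl⟩
    exact Adir p q hu hv
  · intro hw
    obtain ⟨u, v, huv, hu, hv⟩ := Bdir p q w (ftop q) hw
    exact ⟨u, hu, v, hv, huv⟩

lemma leftQuotient_prod (w : List (Fin 5)) :
    leftQuotient (L1 p * L2 q) w = LangP p q (stP p q w) := by
  ext x
  rw [mem_leftQuotient]
  have h1 : (w ++ x ∈ L1 p * L2 q) ↔ (stP p q (w ++ x)).2 = some (ftop q) := by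
    rw [prod_lang_eq]; rfl
  rw [h1]
  rw [stP, List.foldl_append]
  rfl

end LIP
namespace LIP
variable (p q : ℕ)

/-! ### computation lemmas for the product automaton -/

lemma RP_dead (v : List (Fin 5)) : ∀ o : St2 q,
    v.foldl (dP p q) ((none : St1 p), o) = (none, v.foldl (d2 q) o) := by
  induction v with
  | nil => intro o; rfl
  | cons l v ih =>
    intro o
    rw [List.foldl_cons, List.foldl_cons]
    have h1 : dP p q ((none : St1 p), o) l = ((none : St1 p), d2 q o l) := by
      rw [dP]
      simp only [d1_dead]
      simp only [ne_acc1_none p, ↓reduceIte]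
    rw [h1, ih]

lemma RP_a_some (k : ℕ) : ∀ (r : ZMod p) (j : Fin (q+1)),
    (List.replicate k (0:Fin 5)).foldl (dP p q) (some (some r), some j)
      = (some (some (r + k)), some j) := by
  induction k with
  | zero => intro r j; simp
  | succ k ih =>
    intro r j
    rw [List.replicate_succ, List.foldl_cons]
    have h1 : dP p q ((some (some r) : St1 p), (some j : St2 q)) 0
        = (some (some (r+1)), some j) := by
      rw [dP]
      have h2 : d2 q (some j) 0 = some j := d2_other q j (by decide) (by decide)
      rw [show d1 p (some (some r)) 0 = some (some (r+1)) from rfl, h2]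
      split <;> rfl
    rw [h1, ih]
    have : (r + 1 + (k:ZMod p)) = r + ((k:ℕ)+1 : ℕ) := by push_cast; ring
    rw [this]

lemma RP_a_N (k : ℕ) : ∀ o : St2 q,
    (List.replicate k (0:Fin 5)).foldl (dP p q) ((some none : St1 p), o)
      = (some none, o) := by
  induction k with
  | zero => intro o; simp
  | succ k ih =>
    intro o
    rw [List.replicate_succ, List.foldl_cons]
    have h1 : dP p q ((some none : St1 p), o) 0 = (some none, o) := by
      rw [dP]
      rw [show d1 p (some none) 0 = some none from rfl]
      rw [if_neg (ne_acc1_N p)]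
      cases o with
      | none => rfl
      | some j => rw [d2_other q j (by decide) (by decide)]
    rw [h1, ih]

lemma RP_a_nocross [NeZero p] (hp : 2 ≤ p) (k : ℕ) : ∀ (r : ZMod p),
    (∀ i : ℕ, 0 < i → i ≤ k → r + (i : ZMod p) ≠ -1) →
    (List.replicate k (0:Fin 5)).foldl (dP p q) (some (some r), none)
      = (some (some (r + k)), none) := by
  induction k with
  | zero => intro r _; simp
  | succ k ih =>
    intro r hr
    rw [List.replicate_succ, List.foldl_cons]
    have hne : r + 1 ≠ -1 := by
      have := hr 1 (by omega) (by omega)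
      simpa using this
    have h1 : dP p q ((some (some r) : St1 p), (none : St2 q)) 0
        = (some (some (r+1)), none) := by
      rw [dP]
      rw [show d1 p (some (some r)) 0 = some (some (r+1)) from rfl]
      rw [if_neg (by rw [tr_eq_acc1_iff]; exact hne)]
      rfl
    rw [h1, ih (r+1) (by
      intro i hi hik
      have := hr (i+1) (by omega) (by omega)
      push_cast at this ⊢
      intro hcon
      exact this (by rw [← hcon]; ring))]
    have : (r + 1 + (k:ZMod p)) = r + ((k:ℕ)+1 : ℕ) := by push_cast; ring
    rw [this]

lemma RP_f_tr0 [NeZero p] (hp : 2 ≤ p) (k : ℕ) : ∀ j : Fin (q+1),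
    (List.replicate k (4:Fin 5)).foldl (dP p q) (some (some 0), some j)
      = (some (some 0), some ⟨min (j.val + k) q, by omega⟩) := by
  induction k with
  | zero =>
    intro j
    rw [List.replicate_zero, List.foldl_nil]
    have : (⟨min (j.val + 0) q, by omega⟩ : Fin (q+1)) = j := by
      refine Fin.ext ?_
      show min (j.val + 0) q = j.val
      have := j.isLt
      omega
    rw [this]
  | succ k ih =>
    intro j
    rw [List.replicate_succ, List.foldl_cons]
    have h1 : dP p q ((some (some 0) : St1 p), (some j : St2 q)) 4
        = (some (some 0), some (bump q j)) := by
      rw [dP]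
      rw [show d1 p (some (some 0)) 4 = some (some 0) from rfl, d2_four]
      rw [if_neg (by rw [tr_eq_acc1_iff]; exact zero_ne_neg_one p hp)]
    rw [h1, ih (bump q j)]
    congr 1
    refine congrArg _ (Fin.ext ?_)
    show min ((bump q j).val + k) q = min (j.val + (k+1)) q
    rw [bump]
    show min (min (j.val + 1) q + k) q = min (j.val + (k+1)) q
    omega

lemma RP_f_tr0_none [NeZero p] (hp : 2 ≤ p) (k : ℕ) :
    (List.replicate k (4:Fin 5)).foldl (dP p q) (some (some 0), none)
      = (some (some 0), none) := by
  induction k with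
  | zero => simp
  | succ k ih =>
    rw [List.replicate_succ, List.foldl_cons]
    have h1 : dP p q ((some (some 0) : St1 p), (none : St2 q)) 4
        = (some (some 0), none) := by
      rw [dP]
      rw [show d1 p (some (some 0)) 4 = some (some 0) from rfl]
      rw [if_neg (by rw [tr_eq_acc1_iff]; exact zero_ne_neg_one p hp)]
      rfl
    rw [h1, ih]

/-- the word `W0` leads any live state to the accepting track with a live run. -/
lemma runW0 [NeZero p] (hp : 2 ≤ p) (s : Option (ZMod p)) (o : St2 q) :
    ∃ j', ((4:Fin 5) :: List.replicate (p-1) 0).foldl (dP p q) (some s, o)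
      = (acc1 p, some j') ∧ (o = none → j' = fin0 q) := by
  rw [List.foldl_cons]
  have h4 : dP p q ((some s : St1 p), o) 4 = (some (some 0), d2 q o 4) := by
    rw [dP, d1_four]
    rw [if_neg (by rw [tr_eq_acc1_iff]; exact zero_ne_neg_one p hp)]
  rw [h4]
  cases o with
  | some j0 =>
    rw [d2_four]
    rw [RP_a_some]
    refine ⟨bump q j0, ?_, by simp⟩
    rw [show ((0:ZMod p) + ((p-1:ℕ):ZMod p)) = ((p-1:ℕ):ZMod p) from by ring,
      cast_pred p hp]
    rfl
  | none =>
    rw [d2_dead]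
    have hsplit : List.replicate (p-1) (0:Fin 5)
        = List.replicate (p-2) 0 ++ [0] := by
      rw [show p - 1 = (p-2) + 1 by omega]
      rw [List.replicate_succ' (n := p-2) (a := (0 : Fin 5))]
    rw [hsplit, List.foldl_append]
    rw [RP_a_nocross p q hp (p-2) 0 (by
      intro i hi hik
      rw [zero_add]
      exact cast_ne_neg_one p hp (by omega))]
    rw [List.foldl_cons, List.foldl_nil]
    have hfin : (0 : ZMod p) + ((p-2:ℕ) : ZMod p) + 1 = -1 := by
      rw [zero_add]
      rw [show ((p-2:ℕ) : ZMod p) = ((p-1:ℕ) : ZMod p) - 1 from ?_]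
      · rw [cast_pred p hp]; ring
      · rw [show p - 1 = (p-2)+1 by omega]
        push_cast
        ring
    have h0 : dP p q ((some (some ((0:ZMod p) + ((p-2:ℕ):ZMod p))) : St1 p), (none : St2 q)) 0
        = (acc1 p, some (fin0 q)) := by
      rw [dP]
      rw [show d1 p (some (some ((0:ZMod p) + ((p-2:ℕ):ZMod p)))) 0
        = some (some ((0:ZMod p) + ((p-2:ℕ):ZMod p) + 1)) from rfl]
      rw [if_pos (by rw [tr_eq_acc1_iff]; exact hfin)]
      rw [acc1, hfin]
      rfl
    rw [h0]
    exact ⟨fin0 q, rfl, fun _ => rfl⟩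

end LIP
namespace LIP
variable (p q : ℕ)

/-! ### distinguishing words -/

/-- test for the run component -/
lemma T2test (j : Fin (q+1)) (σ : St1 p × St2 q) :
    ((3:Fin 5) :: List.replicate (q - j.val) 4) ∈ LangP p q σ
      ↔ ∃ t, σ.2 = some t ∧ j.val ≤ t.val := by
  rw [LangP, lang_mem_setOf, List.foldl_cons]
  have h3 : dP p q σ 3 = ((none : St1 p), σ.2) := by
    rw [dP, d1_three, if_neg (ne_acc1_none p)]
    cases hσ : σ.2 with
    | none => rw [d2_dead]
    | some t => rw [d2_other q t (by decide) (by decide)]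
  rw [h3, RP_dead]
  cases hσ : σ.2 with
  | none =>
    rw [foldl_d2_dead]
    simp
  | some t =>
    rw [run2_f]
    rw [Option.some_inj, Fin.ext_iff, ftop]
    show min (t.val + (q - j.val)) q = q ↔ _
    have := t.isLt
    have := j.isLt
    constructor
    · intro h; exact ⟨t, rfl, by omega⟩
    · rintro ⟨t', ht', hle⟩
      obtain rfl := Option.some_injective _ ht'
      omega

/-- after an accepting track state with a live run, `[2] ++ [4] ++ 4^(q-1)` accepts -/
lemma tailTest [NeZero p] (hp : 2 ≤ p) (hq : 1 ≤ q) (o : St2 q) :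
    (((2:Fin 5) :: (4:Fin 5) :: List.replicate (q-1) 4).foldl (dP p q)
      (acc1 p, o)).2 = some (ftop q) := by
  rw [List.foldl_cons]
  have h2 : dP p q ((acc1 p : St1 p), o) 2 = (acc1 p, some (fin0 q)) := by
    rw [dP]
    rw [show d1 p (acc1 p) 2 = acc1 p from by rw [acc1]; rfl]
    rw [if_pos rfl, show d2 q o 2 = none from d2_two q _]
    rfl
  rw [h2, List.foldl_cons]
  have h4 : dP p q ((acc1 p : St1 p), (some (fin0 q) : St2 q)) 4
      = (some (some 0), some (bump q (fin0 q))) := by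
    rw [dP]
    rw [show d1 p (acc1 p) 4 = some (some 0) from by rw [acc1]; rfl, d2_four]
    rw [if_neg (by rw [tr_eq_acc1_iff]; exact zero_ne_neg_one p hp)]
  rw [h4, RP_f_tr0 p q hp]
  rw [Option.some_inj, Fin.ext_iff, ftop]
  show min ((bump q (fin0 q)).val + (q-1)) q = q
  rw [bump, fin0]
  show min (min (0 + 1) q + (q-1)) q = q
  omega

/-- same tail from a non-accepting live track state rejects -/
lemma tailTest_neg [NeZero p] (hp : 2 ≤ p) {r : ZMod p} (hr : r ≠ -1) (o : St2 q) :
    (((2:Fin 5) :: (4:Fin 5) :: List.replicate (q-1) 4).foldl (dP p q)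
      (some (some r), o)).2 ≠ some (ftop q) := by
  rw [List.foldl_cons]
  have h2 : dP p q ((some (some r) : St1 p), o) 2 = (some (some r), none) := by
    rw [dP, d1_two]
    rw [if_neg (by rw [tr_eq_acc1_iff]; exact hr), d2_two]
  rw [h2, List.foldl_cons]
  have h4 : dP p q ((some (some r) : St1 p), (none : St2 q)) 4
      = (some (some 0), none) := by
    rw [dP, d1_four]
    rw [if_neg (by rw [tr_eq_acc1_iff]; exact zero_ne_neg_one p hp), d2_dead]
  rw [h4, RP_f_tr0_none p q hp]
  simp

/-- same tail from the initial state rejects -/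
lemma tailTest_N [NeZero p] (hp : 2 ≤ p) (o : St2 q) :
    (((2:Fin 5) :: (4:Fin 5) :: List.replicate (q-1) 4).foldl (dP p q)
      (some none, o)).2 ≠ some (ftop q) := by
  rw [List.foldl_cons]
  have h2 : dP p q ((some none : St1 p), o) 2 = (some none, none) := by
    rw [dP, show d1 p (some none) 2 = some none from rfl]
    rw [if_neg (ne_acc1_N p), d2_two]
  rw [h2, List.foldl_cons]
  have h4 : dP p q ((some none : St1 p), (none : St2 q)) 4
      = (some (some 0), none) := by
    rw [dP, show d1 p (some none) 4 = some (some 0) from rfl]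
    rw [if_neg (by rw [tr_eq_acc1_iff]; exact zero_ne_neg_one p hp), d2_dead]
  rw [h4, RP_f_tr0_none p q hp]
  simp

/-- dead states reject any word containing the letter 2 -/
lemma deadTest (u v : List (Fin 5)) (o : St2 q) :
    ((u ++ (2:Fin 5) :: v).foldl (dP p q) ((none : St1 p), o)).2 ≠ some (ftop q) := by
  rw [RP_dead, List.foldl_append, List.foldl_cons, d2_two, foldl_d2_dead]
  simp

/-- test for liveness of the L' component -/
lemma T0test [NeZero p] (hp : 2 ≤ p) (hq : 1 ≤ q) (σ : St1 p × St2 q) :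
    (((4:Fin 5) :: List.replicate (p-1) 0) ++
        ((2:Fin 5) :: (4:Fin 5) :: List.replicate (q-1) 4)) ∈ LangP p q σ
      ↔ σ.1 ≠ none := by
  rw [LangP, lang_mem_setOf, List.foldl_append]
  obtain ⟨s1, o1⟩ := σ
  cases s1 with
  | none =>
    simp only [ne_eq, not_true_eq_false, iff_false]
    have : ((4:Fin 5) :: List.replicate (p-1) 0) ++
        ((2:Fin 5) :: (4:Fin 5) :: List.replicate (q-1) 4)
        = ((4:Fin 5) :: List.replicate (p-1) 0) ++ (2:Fin 5)
          :: ((4:Fin 5) :: List.replicate (q-1) 4) := rfl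
    rw [← List.foldl_append, this]
    exact deadTest p q _ _ o1
  | some s =>
    simp only [ne_eq, reduceCtorEq, not_false_eq_true, iff_true]
    obtain ⟨j', hj', -⟩ := runW0 p q hp s o1
    rw [hj']
    exact tailTest p q hp hq (some j')

/-- an `a`-run from a track state always stays on the track. -/
lemma RP_a_ex (k : ℕ) : ∀ (r : ZMod p) (o : St2 q), ∃ o',
    (List.replicate k (0:Fin 5)).foldl (dP p q) (some (some r), o)
      = (some (some (r + k)), o') := by
  induction k with
  | zero => intro r o; exact ⟨o, by simp⟩
  | succ k ih =>
    intro r o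
    rw [List.replicate_succ, List.foldl_cons]
    have h1 : dP p q ((some (some r) : St1 p), o) 0
        = (some (some (r+1)), (dP p q ((some (some r) : St1 p), o) 0).2) := by
      refine Prod.ext ?_ rfl
      rfl
    rw [h1]
    obtain ⟨o', ho'⟩ := ih (r+1) ((dP p q ((some (some r) : St1 p), o) 0).2)
    refine ⟨o', ?_⟩
    rw [ho']
    have : (r + 1 + (k:ZMod p)) = r + ((k:ℕ)+1 : ℕ) := by push_cast; ring
    rw [this]

/-- test for each track state of the L' component -/
lemma T1test [NeZero p] (hp : 2 ≤ p) (hq : 1 ≤ q) (r : ZMod p) (σ : St1 p × St2 q) :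
    (List.replicate ((-1 - r).val) (0:Fin 5) ++
        ((2:Fin 5) :: (4:Fin 5) :: List.replicate (q-1) 4)) ∈ LangP p q σ
      ↔ σ.1 = some (some r) := by
  rw [LangP, lang_mem_setOf, List.foldl_append]
  obtain ⟨s1, o1⟩ := σ
  cases s1 with
  | none =>
    simp only [reduceCtorEq, iff_false]
    have : List.replicate ((-1 - r).val) (0:Fin 5) ++
        ((2:Fin 5) :: (4:Fin 5) :: List.replicate (q-1) 4)
        = List.replicate ((-1 - r).val) (0:Fin 5) ++ (2:Fin 5)
          :: ((4:Fin 5) :: List.replicate (q-1) 4) := rfl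
    rw [← List.foldl_append, this]
    exact deadTest p q _ _ o1
  | some s =>
    cases s with
    | none =>
      simp only [Option.some_inj, reduceCtorEq, iff_false]
      rw [RP_a_N]
      exact tailTest_N p q hp o1
    | some r' =>
      -- a-run from track r'
      obtain ⟨o', ho'⟩ := RP_a_ex p q ((-1 - r).val) r' o1
      rw [ho', natCast_val_zmod]
      have hval : r' + (-1 - r) = -1 ↔ r' = r := by
        constructor
        · intro h
          have : r' + (-1 - r) + r = -1 + r := by rw [h]
          rw [show r' + (-1 - r) + r = r' + -1 from by ring] at this
          have h2 : r' + -1 + 1 = -1 + r + 1 := by rw [this]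
          rw [show r' + -1 + 1 = r' from by ring, show -1 + r + 1 = r from by ring] at h2
          exact h2
        · rintro rfl; ring
      by_cases heq : r' = r
      · subst heq
        simp only [Option.some_inj, iff_true]
        rw [show r' + (-1 - r') = -1 from by ring]
        exact tailTest p q hp hq o'
      · simp only [Option.some_inj, heq, iff_false]
        intro hcon
        exact tailTest_neg p q hp (fun hc => heq (hval.1 hc)) o' hcon

end LIP
namespace LIP
variable (p q : ℕ)

lemma injLangP [NeZero p] (hp : 2 ≤ p) (hq : 1 ≤ q) :
    Function.Injective (LangP p q) := by
  intro σ1 σ2 h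
  have hsnd : σ1.2 = σ2.2 := by
    have key : ∀ (τ1 τ2 : St1 p × St2 q), LangP p q τ1 = LangP p q τ2 →
        ∀ t1, τ1.2 = some t1 → ∃ t2, τ2.2 = some t2 ∧ t1.val ≤ t2.val := by
      intro τ1 τ2 hh t1 ht1
      have h1 : ((3:Fin 5) :: List.replicate (q - t1.val) 4) ∈ LangP p q τ1 :=
        (T2test p q t1 τ1).2 ⟨t1, ht1, le_rfl⟩
      rw [hh] at h1
      obtain ⟨t2, ht2, hle⟩ := (T2test p q t1 τ2).1 h1
      exact ⟨t2, ht2, hle⟩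
    cases h1 : σ1.2 with
    | none =>
      cases h2 : σ2.2 with
      | none => rfl
      | some t2 =>
        obtain ⟨t1, ht1, -⟩ := key σ2 σ1 h.symm t2 h2
        rw [h1] at ht1
        exact absurd ht1 (by simp)
    | some t1 =>
      obtain ⟨t2, ht2, hle12⟩ := key σ1 σ2 h t1 h1
      obtain ⟨t1', ht1', hle21⟩ := key σ2 σ1 h.symm t2 ht2
      rw [h1] at ht1'
      obtain rfl := Option.some_injective _ ht1'
      rw [ht2]
      congr 1
      exact Fin.ext (by omega)
  have hfst : σ1.1 = σ2.1 := by
    cases h1 : σ1.1 with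
    | none =>
      cases h2 : σ2.1 with
      | none => rfl
      | some s2 =>
        have m2 : (((4:Fin 5) :: List.replicate (p-1) 0) ++
            ((2:Fin 5) :: (4:Fin 5) :: List.replicate (q-1) 4)) ∈ LangP p q σ2 :=
          (T0test p q hp hq σ2).2 (by rw [h2]; simp)
        rw [← h] at m2
        have := (T0test p q hp hq σ1).1 m2
        exact absurd h1 this
    | some s1 =>
      cases s1 with
      | some r =>
        have m1 : (List.replicate ((-1 - r).val) (0:Fin 5) ++
            ((2:Fin 5) :: (4:Fin 5) :: List.replicate (q-1) 4)) ∈ LangP p q σ1 :=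
          (T1test p q hp hq r σ1).2 h1
        rw [h] at m1
        exact ((T1test p q hp hq r σ2).1 m1).symm
      | none =>
        -- σ1.1 = some none : live but no track state
        have m1 : (((4:Fin 5) :: List.replicate (p-1) 0) ++
            ((2:Fin 5) :: (4:Fin 5) :: List.replicate (q-1) 4)) ∈ LangP p q σ1 :=
          (T0test p q hp hq σ1).2 (by rw [h1]; simp)
        rw [h] at m1
        have h2live : σ2.1 ≠ none := (T0test p q hp hq σ2).1 m1
        cases h2 : σ2.1 with
        | none => exact absurd h2 h2live
        | some s2 =>
          cases s2 with
          | none => rfl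
          | some r2 =>
            have m2 : (List.replicate ((-1 - r2).val) (0:Fin 5) ++
                ((2:Fin 5) :: (4:Fin 5) :: List.replicate (q-1) 4)) ∈ LangP p q σ2 :=
              (T1test p q hp hq r2 σ2).2 h2
            rw [← h] at m2
            have := (T1test p q hp hq r2 σ1).1 m2
            rw [h1] at this
            exact absurd this (by simp)
  exact Prod.ext hfst hsnd

end LIP
namespace LIP
variable (p q : ℕ)

lemma stP_W0 [NeZero p] (hp : 2 ≤ p) :
    stP p q ((4:Fin 5) :: List.replicate (p-1) 0) = (acc1 p, some (fin0 q)) := by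
  obtain ⟨j', hj', hnone⟩ := runW0 p q hp none none
  rw [stP, hj', hnone rfl]

lemma val_eq_pred_iff [NeZero p] (hp : 2 ≤ p) (r : ZMod p) :
    r = -1 ↔ r.val = p - 1 := by
  constructor
  · rintro rfl
    rw [← cast_pred p hp, ZMod.val_cast_of_lt (by omega)]
  · intro h
    rw [← natCast_val_zmod p r, h, cast_pred p hp]

lemma reach_tr [NeZero p] (hp : 2 ≤ p) (hq : 1 ≤ q) (r : ZMod p) (j : Fin (q+1)) :
    ∃ w, stP p q w = (some (some r), some j) := by
  by_cases hj0 : j.val = 0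
  · refine ⟨((4:Fin 5) :: List.replicate (p-1) 0) ++ List.replicate ((r+1).val) 0, ?_⟩
    rw [stP, List.foldl_append, ← stP, stP_W0 p q hp]
    rw [show (acc1 p : St1 p) = some (some (-1)) from rfl]
    rw [RP_a_some, natCast_val_zmod]
    rw [show (-1 : ZMod p) + (r + 1) = r from by ring]
    congr 2
    exact (Fin.ext (by rw [fin0]; exact hj0.symm))
  · refine ⟨((4:Fin 5) :: List.replicate (p-1) 0) ++ [4]
      ++ List.replicate (j.val - 1) 4 ++ List.replicate r.val 0, ?_⟩
    rw [stP, List.foldl_append, List.foldl_append, List.foldl_append, ← stP,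
      stP_W0 p q hp]
    have h4 : List.foldl (dP p q) ((acc1 p, some (fin0 q)) : St1 p × St2 q) [4]
        = (some (some 0), some (bump q (fin0 q))) := by
      rw [List.foldl_cons, List.foldl_nil, dP]
      rw [show d1 p (acc1 p) 4 = some (some 0) from by rw [acc1]; rfl, d2_four]
      rw [if_neg (by rw [tr_eq_acc1_iff]; exact zero_ne_neg_one p hp)]
    rw [h4, RP_f_tr0 p q hp]
    have hbj : (⟨min ((bump q (fin0 q)).val + (j.val - 1)) q, by omega⟩ : Fin (q+1)) = j := by
      refine Fin.ext ?_
      show min ((bump q (fin0 q)).val + (j.val - 1)) q = j.val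
      rw [bump, fin0]
      show min (min (0 + 1) q + (j.val - 1)) q = j.val
      have := j.isLt
      omega
    rw [hbj, RP_a_some, zero_add, natCast_val_zmod]

lemma reachP [NeZero p] (hp : 2 ≤ p) (hq : 1 ≤ q) (σ : St1 p × St2 q)
    (hσ : σ ≠ (acc1 p, none)) : ∃ w, stP p q w = σ := by
  obtain ⟨s, o⟩ := σ
  cases o with
  | some j =>
    cases s with
    | none =>
      refine ⟨((4:Fin 5) :: List.replicate (p-1) 0) ++ [3] ++ List.replicate j.val 4, ?_⟩
      rw [stP, List.foldl_append, List.foldl_append, ← stP, stP_W0 p q hp]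
      have h3 : List.foldl (dP p q) ((acc1 p, some (fin0 q)) : St1 p × St2 q) [3]
          = ((none : St1 p), some (fin0 q)) := by
        rw [List.foldl_cons, List.foldl_nil, dP, d1_three]
        rw [if_neg (ne_acc1_none p), d2_other q _ (by decide) (by decide)]
      rw [h3, RP_dead, run2_f]
      congr 2
      refine Fin.ext ?_
      show min ((fin0 q).val + j.val) q = j.val
      rw [fin0]
      show min (0 + j.val) q = j.val
      have := j.isLt
      omega
    | some s' =>
      cases s' with
      | some r => exact reach_tr p q hp hq r j
      | none =>
        obtain ⟨w, hw⟩ := reach_tr p q hp hq 0 j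
        refine ⟨w ++ [1], ?_⟩
        rw [stP, List.foldl_append, ← stP, hw, List.foldl_cons, List.foldl_nil, dP]
        rw [show d1 p (some (some 0)) 1 = some none from rfl]
        rw [if_neg (ne_acc1_N p), d2_other q _ (by decide) (by decide)]
  | none =>
    cases s with
    | none =>
      refine ⟨[3], ?_⟩
      rw [stP, List.foldl_cons, List.foldl_nil, dP, d1_three]
      rw [if_neg (ne_acc1_none p), d2_dead]
    | some s' =>
      cases s' with
      | none => exact ⟨[], rfl⟩
      | some r =>
        have hr : r ≠ -1 := by
          intro hcon
          subst hcon
          exact hσ (by rw [acc1])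
        refine ⟨(4:Fin 5) :: List.replicate r.val 0, ?_⟩
        rw [stP, List.foldl_cons]
        have h4 : dP p q ((some none : St1 p), (none : St2 q)) 4
            = (some (some 0), none) := by
          rw [dP, show d1 p (some none) 4 = some (some 0) from rfl]
          rw [if_neg (by rw [tr_eq_acc1_iff]; exact zero_ne_neg_one p hp), d2_dead]
        rw [h4]
        have hrval : r.val < p - 1 := by
          have h1 := r.val_lt
          have h2 : r.val ≠ p - 1 := fun hc => hr ((val_eq_pred_iff p hp r).2 hc)
          omega
        rw [RP_a_nocross p q hp r.val 0 (by
          intro i hi hik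
          rw [zero_add]
          exact cast_ne_neg_one p hp (by omega))]
        rw [zero_add, natCast_val_zmod]

lemma alphabetOf_prod [NeZero p] (hp : 2 ≤ p) (hq : 1 ≤ q) :
    alphabetOf (L1 p * L2 q) = Set.univ := by
  apply Set.eq_univ_of_forall
  intro l
  have hW0 : (4:Fin 5) :: List.replicate (p-1) 0 ∈ L1 p := w0_mem_L1 p hp
  have hVq : List.replicate q (4:Fin 5) ∈ L2 q := repq_mem_L2 q
  fin_cases l
  · -- letter 0
    refine ⟨[4], List.replicate (p-2) 0 ++ List.replicate q 4, ?_⟩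
    refine Language.mem_mul.2 ⟨(4:Fin 5) :: List.replicate (p-1) 0, hW0,
      List.replicate q 4, hVq, ?_⟩
    rw [show p - 1 = (p-2)+1 by omega, List.replicate_succ]
    simp
  · -- letter 1
    refine ⟨[], ((4:Fin 5) :: List.replicate (p-1) 0) ++ List.replicate q 4, ?_⟩
    refine Language.mem_mul.2 ⟨(1:Fin 5) :: (4:Fin 5) :: List.replicate (p-1) 0, ?_,
      List.replicate q 4, hVq, by simp⟩
    show st1 p _ = acc1 p
    rw [st1, List.foldl_cons, d1_one]
    exact memL1_from_live p hp none
  · -- letter 2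
    refine ⟨[4], List.replicate (p-1) 0 ++ List.replicate q 4, ?_⟩
    refine Language.mem_mul.2 ⟨(4:Fin 5) :: (2:Fin 5) :: List.replicate (p-1) 0, ?_,
      List.replicate q 4, hVq, by simp⟩
    show st1 p _ = acc1 p
    rw [st1, List.foldl_cons, List.foldl_cons, d1_four, d1_two, run1_a]
    rw [show ((0:ZMod p) + (p-1:ℕ)) = ((p-1:ℕ) : ZMod p) from by ring, cast_pred p hp, acc1]
  · -- letter 3
    refine ⟨(4:Fin 5) :: List.replicate (p-1) 0, List.replicate q 4, ?_⟩
    refine Language.mem_mul.2 ⟨(4:Fin 5) :: List.replicate (p-1) 0, hW0,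
      (3:Fin 5) :: List.replicate q 4, cons_mem_L2 q hq (by decide) (by decide), by simp⟩
  · -- letter 4
    refine ⟨[], List.replicate (p-1) 0 ++ List.replicate q 4, ?_⟩
    exact Language.mem_mul.2 ⟨(4:Fin 5) :: List.replicate (p-1) 0, hW0,
      List.replicate q 4, hVq, by simp⟩

lemma quotientSet_prod [NeZero p] (hp : 2 ≤ p) (hq : 1 ≤ q) :
    quotientSet (L1 p * L2 q)
      = LangP p q '' ((Set.univ : Set (St1 p × St2 q)) \ {(acc1 p, none)}) := by
  ext K
  constructor
  · rintro ⟨w, hwa, rfl⟩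
    refine ⟨stP p q w, ⟨trivial, ?_⟩, (leftQuotient_prod p q w).symm⟩
    intro hcon
    simp only [Set.mem_singleton_iff] at hcon
    have h1 : (stP p q w).1 = acc1 p := by rw [hcon]
    have h2 : (stP p q w).2 = none := by rw [hcon]
    obtain ⟨j, hj⟩ := invP p q w h1
    rw [h2] at hj
    exact absurd hj (by simp)
  · rintro ⟨σ, ⟨-, hσ⟩, rfl⟩
    simp only [Set.mem_singleton_iff] at hσ
    obtain ⟨w, hw⟩ := reachP p q hp hq σ hσ
    exact ⟨w, by rw [alphabetOf_prod p q hp hq]; intro a _; trivial,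
      by rw [leftQuotient_prod, hw]⟩

lemma hasComplexity_prod [NeZero p] (hp : 2 ≤ p) (hq : 1 ≤ q) :
    HasComplexity (L1 p * L2 q) ((p+2) * (q+2) - 1) := by
  rw [HasComplexity, quotientSet_prod p q hp hq]
  have hfin : ((Set.univ : Set (St1 p × St2 q)) \ {(acc1 p, none)}).Finite :=
    Set.finite_univ.diff
  constructor
  · exact hfin.image _
  · rw [Set.ncard_image_of_injective _ (injLangP p q hp hq)]
    rw [Set.ncard_diff_singleton_of_mem (Set.mem_univ _)]
    rw [Set.ncard_univ]
    have hcard : Nat.card (St1 p × St2 q) = (p+2) * (q+2) := by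
      rw [Nat.card_prod]
      congr 1
      · rw [show St1 p = Option (Option (ZMod p)) from rfl]
        rw [Nat.card_eq_fintype_card, Fintype.card_option, Fintype.card_option,
          ZMod.card]
      · rw [show St2 q = Option (Fin (q+1)) from rfl]
        rw [Nat.card_eq_fintype_card, Fintype.card_option, Fintype.card_fin]
    rw [hcard]

end LIP

/-- product of a regular language with a left ideal: upper bound
`m·n + m + n`, and tightness by left ideals over incomparable alphabets. -/
theorem left_ideal_product (m n : ℕ) (hm : 4 ≤ m) (hn : 4 ≤ n) :
    (∀ (α : Type) (L' L : Language α), HasComplexity L' m →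
      IsLeftIdeal L → HasComplexity L n →
      (quotientSet (L' * L)).Finite ∧
        (quotientSet (L' * L)).ncard ≤ m * n + m + n) ∧
    (∃ L' L : Language (Fin 5), IsLeftIdeal L' ∧ IsLeftIdeal L ∧
      (alphabetOf L' \ alphabetOf L).Nonempty ∧
      (alphabetOf L \ alphabetOf L').Nonempty ∧
      HasComplexity L' m ∧ HasComplexity L n ∧
      HasComplexity (L' * L) (m * n + m + n)) := by
  constructor
  · intro α L' L h1 h2 h3
    exact part1_bound m n hm hn α L' L h1 h2 h3
  · haveI : NeZero (m-1) := ⟨by omega⟩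
    have hp : 2 ≤ m - 1 := by omega
    have hq : 1 ≤ n - 1 := by omega
    refine ⟨LIP.L1 (m-1), LIP.L2 (n-1), LIP.isLeftIdeal_L1 _ hp,
      LIP.isLeftIdeal_L2 _ hq, ?_, ?_, ?_, ?_, ?_⟩
    · refine ⟨2, ?_⟩
      rw [Set.mem_diff, LIP.alphabetOf_L1 _ hp, LIP.alphabetOf_L2 _ hq,
        LIP.Sig1, LIP.Sig2]
      constructor
      · simp
      · simp only [Set.mem_insert_iff, Set.mem_singleton_iff]
        decide
    · refine ⟨3, ?_⟩
      rw [Set.mem_diff, LIP.alphabetOf_L1 _ hp, LIP.alphabetOf_L2 _ hq,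
        LIP.Sig1, LIP.Sig2]
      constructor
      · simp
      · simp only [Set.mem_insert_iff, Set.mem_singleton_iff]
        decide
    · have h := LIP.hasComplexity_L1 (m-1) hp
      rwa [show m - 1 + 1 = m by omega] at h
    · have h := LIP.hasComplexity_L2 (n-1) hq
      rwa [show n - 1 + 1 = n by omega] at h
    · have h := LIP.hasComplexity_prod (m-1) (n-1) hp hq
      have harith : ((m-1)+2) * ((n-1)+2) - 1 = m * n + m + n := by
        rw [show m - 1 + 2 = m + 1 by omega, show n - 1 + 2 = n + 1 by omega]
        have : (m+1) * (n+1) = m*n + m + n + 1 := by ring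
        omega
      rwa [harith] at h
end

section
/- For all m, n ≥ 4: (1) there exist left ideals L' and L with quotient complexities m and n, with Σ_{L'} \ Σ_L ≠ ∅ and Σ_L \ Σ_{L'} ≠ ∅, such that κ(L' ∪ L) = (m+1)(n+1) and κ(L' ⊕ L) = (m+1)(n+1); (2) there exist left ideals L' and L with quotient complexities m and n, with Σ_{L'} \ Σ_L ≠ ∅, such that κ(L' \ L) = m·n + m; and (3) there exist left ideals L' and L with quotient complexities m and n such that κ(L' ∩ L) = m·n. (Thus the unrestricted complexities of boolean operations on left ideals equal those on arbitrary regular languages.) -/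
namespace LIBT

def A1 : Set (Fin 5) := {0,1,2}
def A2 : Set (Fin 5) := {0,1,3}

def LL1 (M : ℕ) : Language (Fin 5) := {w | (∀ a ∈ w, a ∈ A1) ∧ M ≤ w.count 0}
def LL2 (N : ℕ) : Language (Fin 5) := {w | (∀ a ∈ w, a ∈ A2) ∧ N ≤ w.count 1}
def Fq (M r : ℕ) : Language (Fin 5) := {x | r ≤ M ∧ (∀ a ∈ x, a ∈ A1) ∧ r ≤ x.count 0}
def Gq (N t : ℕ) : Language (Fin 5) := {x | t ≤ N ∧ (∀ a ∈ x, a ∈ A2) ∧ t ≤ x.count 1}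

lemma mem_LL1 {M : ℕ} {w : List (Fin 5)} :
    w ∈ LL1 M ↔ (∀ a ∈ w, a ∈ A1) ∧ M ≤ w.count 0 := Iff.rfl
lemma mem_LL2 {N : ℕ} {w : List (Fin 5)} :
    w ∈ LL2 N ↔ (∀ a ∈ w, a ∈ A2) ∧ N ≤ w.count 1 := Iff.rfl
lemma mem_Fq {M r : ℕ} {x : List (Fin 5)} :
    x ∈ Fq M r ↔ r ≤ M ∧ (∀ a ∈ x, a ∈ A1) ∧ r ≤ x.count 0 := Iff.rfl
lemma mem_Gq {N t : ℕ} {x : List (Fin 5)} :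
    x ∈ Gq N t ↔ t ≤ N ∧ (∀ a ∈ x, a ∈ A2) ∧ t ≤ x.count 1 := Iff.rfl
lemma mem_leftQuotient {α : Type*} {L : Language α} {w x : List α} :
    x ∈ leftQuotient L w ↔ w ++ x ∈ L := Iff.rfl

lemma mem_alpha {X : Language (Fin 5)} {w : List (Fin 5)} {a : Fin 5}
    (hw : w ∈ X) (ha : a ∈ w) : a ∈ alphabetOf X := by
  obtain ⟨s, t, rfl⟩ := List.append_of_mem ha
  exact ⟨s, t, by simpa using hw⟩

lemma alpha_sub {X : Language (Fin 5)} {S : Set (Fin 5)}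
    (h : ∀ w ∈ X, ∀ a ∈ w, a ∈ S) : alphabetOf X ⊆ S := by
  rintro a ⟨u, v, huv⟩
  exact h _ huv a (by simp)

lemma quot1_good (M : ℕ) (w : List (Fin 5)) (hw : ∀ a ∈ w, a ∈ A1) :
    leftQuotient (LL1 M) w = Fq M (M - w.count 0) := by
  ext x
  simp only [mem_leftQuotient, mem_LL1, mem_Fq, List.forall_mem_append, List.count_append]
  constructor
  · rintro ⟨⟨h1, h2⟩, h3⟩
    exact ⟨by omega, h2, by omega⟩
  · rintro ⟨h1, h2, h3⟩
    exact ⟨⟨hw, h2⟩, by omega⟩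

lemma quot1_bad (M : ℕ) (w : List (Fin 5)) (hw : ¬ ∀ a ∈ w, a ∈ A1) :
    leftQuotient (LL1 M) w = Fq M (M + 1) := by
  ext x
  simp only [mem_leftQuotient, mem_LL1, mem_Fq, List.forall_mem_append, List.count_append]
  constructor
  · rintro ⟨⟨h1, _⟩, _⟩; exact absurd h1 hw
  · rintro ⟨h1, _⟩; omega

lemma quot2_good (N : ℕ) (w : List (Fin 5)) (hw : ∀ a ∈ w, a ∈ A2) :
    leftQuotient (LL2 N) w = Gq N (N - w.count 1) := by
  ext x
  simp only [mem_leftQuotient, mem_LL2, mem_Gq, List.forall_mem_append, List.count_append]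
  constructor
  · rintro ⟨⟨h1, h2⟩, h3⟩
    exact ⟨by omega, h2, by omega⟩
  · rintro ⟨h1, h2, h3⟩
    exact ⟨⟨hw, h2⟩, by omega⟩

lemma quot2_bad (N : ℕ) (w : List (Fin 5)) (hw : ¬ ∀ a ∈ w, a ∈ A2) :
    leftQuotient (LL2 N) w = Gq N (N + 1) := by
  ext x
  simp only [mem_leftQuotient, mem_LL2, mem_Gq, List.forall_mem_append, List.count_append]
  constructor
  · rintro ⟨⟨h1, _⟩, _⟩; exact absurd h1 hw
  · rintro ⟨h1, _⟩; omega

lemma memFq (M s : ℕ) (l1 l2 : List (Fin 5)) (i : ℕ)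
    (h1 : ∀ a ∈ l1, a ∈ A1) (h2 : ∀ a ∈ l2, a ∈ A1)
    (c1 : l1.count 0 = 0) (c2 : l2.count 0 = 0) :
    (l1 ++ List.replicate i 0 ++ l2) ∈ Fq M s ↔ s ≤ M ∧ s ≤ i := by
  rw [mem_Fq]
  simp only [List.forall_mem_append, List.count_append]
  constructor
  · rintro ⟨hs, _, hc⟩
    rw [c1, c2, List.count_replicate_self] at hc
    exact ⟨hs, by omega⟩
  · rintro ⟨hs, hi⟩
    refine ⟨hs, ⟨⟨h1, ?_⟩, h2⟩, ?_⟩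
    · intro a ha
      rw [List.eq_of_mem_replicate ha]
      simp [A1]
    · rw [c1, c2, List.count_replicate_self]; omega

lemma memGq (N t : ℕ) (l1 l2 : List (Fin 5)) (j : ℕ)
    (h1 : ∀ a ∈ l1, a ∈ A2) (h2 : ∀ a ∈ l2, a ∈ A2)
    (c1 : l1.count 1 = 0) (c2 : l2.count 1 = 0) :
    (l1 ++ List.replicate j 1 ++ l2) ∈ Gq N t ↔ t ≤ N ∧ t ≤ j := by
  rw [mem_Gq]
  simp only [List.forall_mem_append, List.count_append]
  constructor
  · rintro ⟨hs, _, hc⟩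
    rw [c1, c2, List.count_replicate_self] at hc
    exact ⟨hs, by omega⟩
  · rintro ⟨hs, hj⟩
    refine ⟨hs, ⟨⟨h1, ?_⟩, h2⟩, ?_⟩
    · intro a ha
      rw [List.eq_of_mem_replicate ha]
      simp [A2]
    · rw [c1, c2, List.count_replicate_self]; omega

lemma not_memFq (M s : ℕ) {x : List (Fin 5)} {a : Fin 5} (ha : a ∈ x) (hA : a ∉ A1) :
    x ∉ Fq M s := by
  rintro ⟨_, h, _⟩; exact hA (h a ha)

lemma not_memGq (N t : ℕ) {x : List (Fin 5)} {a : Fin 5} (ha : a ∈ x) (hA : a ∉ A2) :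
    x ∉ Gq N t := by
  rintro ⟨_, h, _⟩; exact hA (h a ha)

lemma keyN (B s s' : ℕ) (hs : s ≤ B + 1) (hs' : s' ≤ B + 1)
    (h : ∀ i, (s ≤ B ∧ s ≤ i) ↔ (s' ≤ B ∧ s' ≤ i)) : s = s' := by
  rcases le_or_gt s B with h1 | h1
  · have h2 := (h s).mp ⟨h1, le_rfl⟩
    rcases le_or_gt s' B with h3 | h3
    · have h4 := (h s').mpr ⟨h3, le_rfl⟩; omega
    · omega
  · rcases le_or_gt s' B with h3 | h3
    · have h4 := (h s').mpr ⟨h3, le_rfl⟩; omega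
    · omega

-- letters helpers
lemma sub1 : A1 ⊆ {0,1,2,3} := by
  intro a h; simp [A1] at h; rcases h with rfl|rfl|rfl <;> simp
lemma sub2 : A2 ⊆ {0,1,2,3} := by
  intro a h; simp [A2] at h; rcases h with rfl|rfl|rfl <;> simp
lemma inter12 {a : Fin 5} (h : a ∈ A1) (h2 : a ∈ A2) : a ∈ ({0,1} : Set (Fin 5)) := by
  simp [A1] at h; simp [A2] at h2; rcases h with rfl|rfl|rfl <;> simp_all

-- membership of concrete words
lemma mem_LL1_word (M : ℕ) (l1 l2 : List (Fin 5))
    (h1 : ∀ a ∈ l1, a ∈ A1) (h2 : ∀ a ∈ l2, a ∈ A1) :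
    (l1 ++ List.replicate M 0 ++ l2) ∈ LL1 M := by
  rw [mem_LL1]
  constructor
  · simp only [List.forall_mem_append]
    refine ⟨⟨h1, ?_⟩, h2⟩
    intro a ha; rw [List.eq_of_mem_replicate ha]; simp [A1]
  · simp only [List.count_append, List.count_replicate_self]; omega

lemma mem_LL2_word (N : ℕ) (l1 l2 : List (Fin 5))
    (h1 : ∀ a ∈ l1, a ∈ A2) (h2 : ∀ a ∈ l2, a ∈ A2) :
    (l1 ++ List.replicate N 1 ++ l2) ∈ LL2 N := by
  rw [mem_LL2]
  constructor
  · simp only [List.forall_mem_append]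
    refine ⟨⟨h1, ?_⟩, h2⟩
    intro a ha; rw [List.eq_of_mem_replicate ha]; simp [A2]
  · simp only [List.count_append, List.count_replicate_self]; omega

lemma not_mem_LL1_count {M : ℕ} {w : List (Fin 5)} (h : w.count 0 < M) : w ∉ LL1 M := by
  intro hw; exact absurd hw.2 (by omega)
lemma not_mem_LL2_count {N : ℕ} {w : List (Fin 5)} (h : w.count 1 < N) : w ∉ LL2 N := by
  intro hw; exact absurd hw.2 (by omega)
lemma not_mem_LL1_letter {M : ℕ} {w : List (Fin 5)} {a : Fin 5} (ha : a ∈ w) (hA : a ∉ A1) :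
    w ∉ LL1 M := fun hw => hA (hw.1 a ha)
lemma not_mem_LL2_letter {N : ℕ} {w : List (Fin 5)} {a : Fin 5} (ha : a ∈ w) (hA : a ∉ A2) :
    w ∉ LL2 N := fun hw => hA (hw.1 a ha)

-- alphabets
lemma alph1 {M : ℕ} (hM : 1 ≤ M) : alphabetOf (LL1 M) = A1 := by
  apply Set.Subset.antisymm (alpha_sub fun w hw => hw.1)
  intro a ha
  have h0 : List.replicate M (0:Fin 5) ∈ LL1 M := by
    simpa using mem_LL1_word M [] [] (by simp) (by simp)
  have h1 : (1:Fin 5) :: List.replicate M 0 ∈ LL1 M := by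
    simpa using mem_LL1_word M [1] [] (by simp [A1]) (by simp)
  have h2 : (2:Fin 5) :: List.replicate M 0 ∈ LL1 M := by
    simpa using mem_LL1_word M [2] [] (by simp [A1]) (by simp)
  simp [A1] at ha
  rcases ha with rfl|rfl|rfl
  · exact mem_alpha h0 (by rw [List.mem_replicate]; exact ⟨by omega, rfl⟩)
  · exact mem_alpha h1 (List.mem_cons_self)
  · exact mem_alpha h2 (List.mem_cons_self)

lemma alph2 {N : ℕ} (hN : 1 ≤ N) : alphabetOf (LL2 N) = A2 := by
  apply Set.Subset.antisymm (alpha_sub fun w hw => hw.1)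
  intro a ha
  have h0 : List.replicate N (1:Fin 5) ∈ LL2 N := by
    simpa using mem_LL2_word N [] [] (by simp) (by simp)
  have h1 : (0:Fin 5) :: List.replicate N 1 ∈ LL2 N := by
    simpa using mem_LL2_word N [0] [] (by simp [A2]) (by simp)
  have h2 : (3:Fin 5) :: List.replicate N 1 ∈ LL2 N := by
    simpa using mem_LL2_word N [3] [] (by simp [A2]) (by simp)
  simp [A2] at ha
  rcases ha with rfl|rfl|rfl
  · exact mem_alpha h1 (List.mem_cons_self)
  · exact mem_alpha h0 (by rw [List.mem_replicate]; exact ⟨by omega, rfl⟩)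
  · exact mem_alpha h2 (List.mem_cons_self)

lemma alph_union {M N : ℕ} (hM : 1 ≤ M) (hN : 1 ≤ N) :
    alphabetOf (LL1 M ⊔ LL2 N) = ({0,1,2,3} : Set (Fin 5)) := by
  apply Set.Subset.antisymm
  · exact alpha_sub fun w hw a ha => by
      rcases hw with hw | hw
      · exact sub1 (hw.1 a ha)
      · exact sub2 (hw.1 a ha)
  · intro a ha
    have h2 : (2:Fin 5) :: List.replicate M 0 ∈ LL1 M ⊔ LL2 N :=
      Or.inl (by simpa using mem_LL1_word M [2] [] (by simp [A1]) (by simp) : (2:Fin 5) :: List.replicate M 0 ∈ LL1 M)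
    have h3 : (3:Fin 5) :: List.replicate N 1 ∈ LL1 M ⊔ LL2 N :=
      Or.inr (by simpa using mem_LL2_word N [3] [] (by simp [A2]) (by simp) : (3:Fin 5) :: List.replicate N 1 ∈ LL2 N)
    simp at ha
    rcases ha with rfl|rfl|rfl|rfl
    · exact mem_alpha h2 (by simp [List.mem_replicate]; omega)
    · exact mem_alpha h3 (by simp [List.mem_replicate]; omega)
    · exact mem_alpha h2 (List.mem_cons_self)
    · exact mem_alpha h3 (List.mem_cons_self)

lemma alph_symdiff {M N : ℕ} (hM : 1 ≤ M) (hN : 1 ≤ N) :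
    alphabetOf ((LL1 M \ LL2 N) ⊔ (LL2 N \ LL1 M)) = ({0,1,2,3} : Set (Fin 5)) := by
  apply Set.Subset.antisymm
  · exact alpha_sub fun w hw a ha => by
      rcases hw with hw | hw
      · exact sub1 (hw.1.1 a ha)
      · exact sub2 (hw.1.1 a ha)
  · intro a ha
    have h2 : (2:Fin 5) :: List.replicate M 0 ∈ (LL1 M \ LL2 N) ⊔ (LL2 N \ LL1 M) :=
      Or.inl ⟨(by simpa using mem_LL1_word M [2] [] (by simp [A1]) (by simp) : (2:Fin 5) :: List.replicate M 0 ∈ LL1 M),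
        not_mem_LL2_letter (List.mem_cons_self) (by simp [A2])⟩
    have h3 : (3:Fin 5) :: List.replicate N 1 ∈ (LL1 M \ LL2 N) ⊔ (LL2 N \ LL1 M) :=
      Or.inr ⟨(by simpa using mem_LL2_word N [3] [] (by simp [A2]) (by simp) : (3:Fin 5) :: List.replicate N 1 ∈ LL2 N),
        not_mem_LL1_letter (List.mem_cons_self) (by simp [A1])⟩
    simp at ha
    rcases ha with rfl|rfl|rfl|rfl
    · exact mem_alpha h2 (by simp [List.mem_replicate]; omega)
    · exact mem_alpha h3 (by simp [List.mem_replicate]; omega)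
    · exact mem_alpha h2 (List.mem_cons_self)
    · exact mem_alpha h3 (List.mem_cons_self)

lemma alph_diff {M N : ℕ} (hM : 1 ≤ M) (hN : 2 ≤ N) :
    alphabetOf (LL1 M \ LL2 N) = A1 := by
  apply Set.Subset.antisymm (alpha_sub fun w hw => hw.1.1)
  intro a ha
  have h0 : List.replicate M (0:Fin 5) ∈ LL1 M \ LL2 N :=
    ⟨(by simpa using mem_LL1_word M [] [] (by simp) (by simp) : List.replicate M (0:Fin 5) ∈ LL1 M),
      not_mem_LL2_count (by simp [List.count_replicate]; omega)⟩
  have h1 : (1:Fin 5) :: List.replicate M 0 ∈ LL1 M \ LL2 N :=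
    ⟨(by simpa using mem_LL1_word M [1] [] (by simp [A1]) (by simp) : (1:Fin 5) :: List.replicate M 0 ∈ LL1 M),
      not_mem_LL2_count (by simp [List.count_replicate]; omega)⟩
  have h2 : (2:Fin 5) :: List.replicate M 0 ∈ LL1 M \ LL2 N :=
    ⟨(by simpa using mem_LL1_word M [2] [] (by simp [A1]) (by simp) : (2:Fin 5) :: List.replicate M 0 ∈ LL1 M),
      not_mem_LL2_letter (List.mem_cons_self) (by simp [A2])⟩
  simp [A1] at ha
  rcases ha with rfl|rfl|rfl
  · exact mem_alpha h0 (by rw [List.mem_replicate]; exact ⟨by omega, rfl⟩)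
  · exact mem_alpha h1 (List.mem_cons_self)
  · exact mem_alpha h2 (List.mem_cons_self)

lemma alph_inter {M N : ℕ} (hM : 1 ≤ M) (hN : 1 ≤ N) :
    alphabetOf (LL1 M ⊓ LL2 N) = ({0,1} : Set (Fin 5)) := by
  apply Set.Subset.antisymm
  · exact alpha_sub fun w hw a ha => inter12 (hw.1.1 a ha) (hw.2.1 a ha)
  · intro a ha
    have hu : List.replicate M (0:Fin 5) ++ List.replicate N 1 ∈ LL1 M ⊓ LL2 N := by
      constructor
      · show List.replicate M (0:Fin 5) ++ List.replicate N 1 ∈ LL1 M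
        simpa using mem_LL1_word M [] (List.replicate N 1)
          (by simp) (by intro b hb; rw [List.eq_of_mem_replicate hb]; simp [A1])
      · show List.replicate M (0:Fin 5) ++ List.replicate N 1 ∈ LL2 N
        simpa using mem_LL2_word N (List.replicate M 0) []
          (by intro b hb; rw [List.eq_of_mem_replicate hb]; simp [A2]) (by simp)
    simp at ha
    rcases ha with rfl|rfl
    · exact mem_alpha hu (by simp [List.mem_replicate]; omega)
    · exact mem_alpha hu (by simp [List.mem_replicate]; omega)

-- left ideals
lemma li1 {M : ℕ} (hM : 1 ≤ M) : IsLeftIdeal (LL1 M) := by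
  refine ⟨⟨List.replicate M 0, by simpa using mem_LL1_word M [] [] (by simp) (by simp)⟩, ?_⟩
  rw [alph1 hM]
  ext w
  rw [Language.mem_mul]
  constructor
  · rintro ⟨u, hu, v, hv, rfl⟩
    rw [mem_LL1]
    refine ⟨List.forall_mem_append.mpr ⟨hu, hv.1⟩, ?_⟩
    rw [List.count_append]
    have := hv.2; omega
  · intro hw
    exact ⟨[], by intro a ha; simp at ha, w, hw, by simp⟩

lemma li2 {N : ℕ} (hN : 1 ≤ N) : IsLeftIdeal (LL2 N) := by
  refine ⟨⟨List.replicate N 1, by simpa using mem_LL2_word N [] [] (by simp) (by simp)⟩, ?_⟩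
  rw [alph2 hN]
  ext w
  rw [Language.mem_mul]
  constructor
  · rintro ⟨u, hu, v, hv, rfl⟩
    rw [mem_LL2]
    refine ⟨List.forall_mem_append.mpr ⟨hu, hv.1⟩, ?_⟩
    rw [List.count_append]
    have := hv.2; omega
  · intro hw
    exact ⟨[], by intro a ha; simp at ha, w, hw, by simp⟩

-- reachability
lemma reach (M N s t : ℕ) (hs : s ≤ M + 1) (ht : t ≤ N + 1) :
    ∃ w : List (Fin 5), (∀ a ∈ w, a ∈ ({0,1,2,3} : Set (Fin 5))) ∧
      leftQuotient (LL1 M) w = Fq M s ∧ leftQuotient (LL2 N) w = Gq N t ∧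
      (s ≤ M → ∀ a ∈ w, a ∈ A1) ∧ (t ≤ N → ∀ a ∈ w, a ∈ A2) ∧
      (s ≤ M → t ≤ N → ∀ a ∈ w, a ∈ ({0,1} : Set (Fin 5))) := by
  rcases le_or_gt s M with hsM | hsM <;> rcases le_or_gt t N with htN | htN
  · -- both good
    refine ⟨List.replicate (M - s) 0 ++ List.replicate (N - t) 1, ?_, ?_, ?_, ?_, ?_, ?_⟩
    · intro a ha
      simp [List.mem_replicate] at ha
      rcases ha with ⟨_, rfl⟩ | ⟨_, rfl⟩ <;> simp
    · rw [quot1_good _ _ (by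
        intro a ha
        simp [List.mem_replicate] at ha
        rcases ha with ⟨_, rfl⟩ | ⟨_, rfl⟩ <;> simp [A1])]
      have hc : (List.replicate (M - s) (0:Fin 5) ++ List.replicate (N - t) 1).count 0
          = M - s := by simp [List.count_replicate]
      rw [hc, Nat.sub_sub_self hsM]
    · rw [quot2_good _ _ (by
        intro a ha
        simp [List.mem_replicate] at ha
        rcases ha with ⟨_, rfl⟩ | ⟨_, rfl⟩ <;> simp [A2])]
      have hc : (List.replicate (M - s) (0:Fin 5) ++ List.replicate (N - t) 1).count 1
          = N - t := by simp [List.count_replicate]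
      rw [hc, Nat.sub_sub_self htN]
    · intro _ a ha
      simp [List.mem_replicate] at ha
      rcases ha with ⟨_, rfl⟩ | ⟨_, rfl⟩ <;> simp [A1]
    · intro _ a ha
      simp [List.mem_replicate] at ha
      rcases ha with ⟨_, rfl⟩ | ⟨_, rfl⟩ <;> simp [A2]
    · intro _ _ a ha
      simp [List.mem_replicate] at ha
      rcases ha with ⟨_, rfl⟩ | ⟨_, rfl⟩ <;> simp
  · -- s good, t bad (t = N+1)
    have htt : t = N + 1 := by omega
    subst htt
    refine ⟨List.replicate (M - s) 0 ++ [2], ?_, ?_, ?_, ?_, ?_, ?_⟩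
    · intro a ha
      simp [List.mem_replicate] at ha
      rcases ha with ⟨_, rfl⟩ | rfl <;> simp
    · rw [quot1_good _ _ (by
        intro a ha
        simp [List.mem_replicate] at ha
        rcases ha with ⟨_, rfl⟩ | rfl <;> simp [A1])]
      have hc : (List.replicate (M - s) (0:Fin 5) ++ [2]).count 0 = M - s := by
        simp [List.count_replicate]
      rw [hc, Nat.sub_sub_self hsM]
    · rw [quot2_bad]
      intro h
      exact absurd (h 2 (by simp)) (by simp [A2])
    · intro _ a ha
      simp [List.mem_replicate] at ha
      rcases ha with ⟨_, rfl⟩ | rfl <;> simp [A1]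
    · omega
    · omega
  · -- s bad, t good
    have hss : s = M + 1 := by omega
    subst hss
    refine ⟨List.replicate (N - t) 1 ++ [3], ?_, ?_, ?_, ?_, ?_, ?_⟩
    · intro a ha
      simp [List.mem_replicate] at ha
      rcases ha with ⟨_, rfl⟩ | rfl <;> simp
    · rw [quot1_bad]
      intro h
      exact absurd (h 3 (by simp)) (by simp [A1])
    · rw [quot2_good _ _ (by
        intro a ha
        simp [List.mem_replicate] at ha
        rcases ha with ⟨_, rfl⟩ | rfl <;> simp [A2])]
      have hc : (List.replicate (N - t) (1:Fin 5) ++ [3]).count 1 = N - t := by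
        simp [List.count_replicate]
      rw [hc, Nat.sub_sub_self htN]
    · omega
    · intro _ a ha
      simp [List.mem_replicate] at ha
      rcases ha with ⟨_, rfl⟩ | rfl <;> simp [A2]
    · omega
  · -- both bad
    have hss : s = M + 1 := by omega
    have htt : t = N + 1 := by omega
    subst hss; subst htt
    refine ⟨[2, 3], ?_, ?_, ?_, by omega, by omega, by omega⟩
    · intro a ha
      simp at ha
      rcases ha with rfl | rfl <;> simp
    · rw [quot1_bad]
      intro h
      exact absurd (h 3 (by simp)) (by simp [A1])
    · rw [quot2_bad]
      intro h
      exact absurd (h 2 (by simp)) (by simp [A2])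

-- lattice membership lemmas
lemma mem_sup' {X Y : Language (Fin 5)} {x : List (Fin 5)} :
    x ∈ X ⊔ Y ↔ x ∈ X ∨ x ∈ Y := Iff.rfl
lemma mem_inf' {X Y : Language (Fin 5)} {x : List (Fin 5)} :
    x ∈ X ⊓ Y ↔ x ∈ X ∧ x ∈ Y := Iff.rfl
lemma mem_sdiff' {X Y : Language (Fin 5)} {x : List (Fin 5)} :
    x ∈ X \ Y ↔ x ∈ X ∧ x ∉ Y := Iff.rfl

-- discriminator words
lemma memFq_x (M s i : ℕ) :
    (List.replicate i (0:Fin 5) ++ [2]) ∈ Fq M s ↔ s ≤ M ∧ s ≤ i := by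
  simpa using memFq M s [] [2] i (by simp)
    (by intro a ha; simp at ha; subst ha; simp [A1]) (by simp) (by simp)
lemma not_memGq_x (N t i : ℕ) : (List.replicate i (0:Fin 5) ++ [2]) ∉ Gq N t :=
  not_memGq N t (a := 2) (by simp) (by simp [A2])
lemma memGq_y (N t j : ℕ) :
    (List.replicate j (1:Fin 5) ++ [3]) ∈ Gq N t ↔ t ≤ N ∧ t ≤ j := by
  simpa using memGq N t [] [3] j (by simp)
    (by intro a ha; simp at ha; subst ha; simp [A2]) (by simp) (by simp)
lemma not_memFq_y (M s j : ℕ) : (List.replicate j (1:Fin 5) ++ [3]) ∉ Fq M s :=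
  not_memFq M s (a := 3) (by simp) (by simp [A1])
lemma memFq_u (M s i j : ℕ) :
    (List.replicate i (0:Fin 5) ++ List.replicate j 1) ∈ Fq M s ↔ s ≤ M ∧ s ≤ i := by
  simpa using memFq M s [] (List.replicate j 1) i (by simp)
    (by intro a ha; rw [List.eq_of_mem_replicate ha]; simp [A1])
    (by simp) (by simp [List.count_replicate])
lemma memGq_u (N t i j : ℕ) :
    (List.replicate i (0:Fin 5) ++ List.replicate j 1) ∈ Gq N t ↔ t ≤ N ∧ t ≤ j := by
  simpa using memGq N t (List.replicate i 0) [] j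
    (by intro a ha; rw [List.eq_of_mem_replicate ha]; simp [A2]) (by simp)
    (by simp [List.count_replicate]) (by simp)

-- quotient pair for arbitrary words
lemma quot_pair (M N : ℕ) (w : List (Fin 5)) :
    ∃ s t : ℕ, s ≤ M + 1 ∧ t ≤ N + 1 ∧
      leftQuotient (LL1 M) w = Fq M s ∧ leftQuotient (LL2 N) w = Gq N t ∧
      ((∀ a ∈ w, a ∈ A1) → s ≤ M) ∧ ((∀ a ∈ w, a ∈ A2) → t ≤ N) := by
  by_cases h1 : ∀ a ∈ w, a ∈ A1 <;> by_cases h2 : ∀ a ∈ w, a ∈ A2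
  · exact ⟨M - w.count 0, N - w.count 1, by omega, by omega,
      quot1_good M w h1, quot2_good N w h2, fun _ => by omega, fun _ => by omega⟩
  · exact ⟨M - w.count 0, N + 1, by omega, by omega,
      quot1_good M w h1, quot2_bad N w h2, fun _ => by omega, fun h => absurd h h2⟩
  · exact ⟨M + 1, N - w.count 1, by omega, by omega,
      quot1_bad M w h1, quot2_good N w h2, fun h => absurd h h1, fun _ => by omega⟩
  · exact ⟨M + 1, N + 1, by omega, by omega,
      quot1_bad M w h1, quot2_bad N w h2, fun h => absurd h h1, fun h => absurd h h2⟩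

lemma complexity_of_image {ι : Type} (X : Language (Fin 5)) (f : ι → Language (Fin 5))
    (S : Finset ι) (hq : quotientSet X = f '' ↑S) (hinj : Set.InjOn f ↑S) :
    HasComplexity X S.card := by
  constructor
  · rw [hq]; exact S.finite_toSet.image f
  · rw [hq, Set.ncard_image_of_injOn hinj, Set.ncard_coe_finset]

-- quotient sets
lemma qs1 {M : ℕ} (hM : 1 ≤ M) :
    quotientSet (LL1 M) = Fq M '' ↑(Finset.Iic M) := by
  ext K
  constructor
  · rintro ⟨w, hw, rfl⟩
    rw [alph1 hM] at hw
    refine ⟨M - w.count 0, by simp, (quot1_good M w hw).symm⟩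
  · rintro ⟨s, hs, rfl⟩
    simp only [Finset.coe_Iic, Set.mem_Iic] at hs
    refine ⟨List.replicate (M - s) 0, ?_, ?_⟩
    · intro a ha; rw [List.eq_of_mem_replicate ha, alph1 hM]; simp [A1]
    · rw [quot1_good _ _ (by intro a ha; rw [List.eq_of_mem_replicate ha]; simp [A1])]
      rw [List.count_replicate_self, Nat.sub_sub_self hs]

lemma qs2 {N : ℕ} (hN : 1 ≤ N) :
    quotientSet (LL2 N) = Gq N '' ↑(Finset.Iic N) := by
  ext K
  constructor
  · rintro ⟨w, hw, rfl⟩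
    rw [alph2 hN] at hw
    refine ⟨N - w.count 1, by simp, (quot2_good N w hw).symm⟩
  · rintro ⟨t, ht, rfl⟩
    simp only [Finset.coe_Iic, Set.mem_Iic] at ht
    refine ⟨List.replicate (N - t) 1, ?_, ?_⟩
    · intro a ha; rw [List.eq_of_mem_replicate ha, alph2 hN]; simp [A2]
    · rw [quot2_good _ _ (by intro a ha; rw [List.eq_of_mem_replicate ha]; simp [A2])]
      rw [List.count_replicate_self, Nat.sub_sub_self ht]

lemma qs_union {M N : ℕ} (hM : 1 ≤ M) (hN : 1 ≤ N) :
    quotientSet (LL1 M ⊔ LL2 N)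
      = (fun p : ℕ × ℕ => Fq M p.1 ⊔ Gq N p.2) '' ↑(Finset.Iic (M+1) ×ˢ Finset.Iic (N+1)) := by
  ext K
  constructor
  · rintro ⟨w, hw, rfl⟩
    obtain ⟨s, t, hs, ht, e1, e2, _, _⟩ := quot_pair M N w
    refine ⟨(s, t), by simp [hs, ht], ?_⟩
    show Fq M s ⊔ Gq N t = _
    rw [← e1, ← e2]; rfl
  · rintro ⟨⟨s, t⟩, hp, rfl⟩
    simp only [Finset.coe_product, Set.mem_prod, Finset.coe_Iic, Set.mem_Iic] at hp
    obtain ⟨w, hw4, hq1, hq2, _, _, _⟩ := reach M N s t hp.1 hp.2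
    refine ⟨w, ?_, ?_⟩
    · intro a ha; rw [alph_union hM hN]; exact hw4 a ha
    · show Fq M s ⊔ Gq N t = _
      rw [← hq1, ← hq2]; rfl

lemma qs_symdiff {M N : ℕ} (hM : 1 ≤ M) (hN : 1 ≤ N) :
    quotientSet ((LL1 M \ LL2 N) ⊔ (LL2 N \ LL1 M))
      = (fun p : ℕ × ℕ => (Fq M p.1 \ Gq N p.2) ⊔ (Gq N p.2 \ Fq M p.1)) ''
          ↑(Finset.Iic (M+1) ×ˢ Finset.Iic (N+1)) := by
  ext K
  constructor
  · rintro ⟨w, hw, rfl⟩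
    obtain ⟨s, t, hs, ht, e1, e2, _, _⟩ := quot_pair M N w
    refine ⟨(s, t), by simp [hs, ht], ?_⟩
    show (Fq M s \ Gq N t) ⊔ (Gq N t \ Fq M s) = _
    rw [← e1, ← e2]; rfl
  · rintro ⟨⟨s, t⟩, hp, rfl⟩
    simp only [Finset.coe_product, Set.mem_prod, Finset.coe_Iic, Set.mem_Iic] at hp
    obtain ⟨w, hw4, hq1, hq2, _, _, _⟩ := reach M N s t hp.1 hp.2
    refine ⟨w, ?_, ?_⟩
    · intro a ha; rw [alph_symdiff hM hN]; exact hw4 a ha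
    · show (Fq M s \ Gq N t) ⊔ (Gq N t \ Fq M s) = _
      rw [← hq1, ← hq2]; rfl

lemma qs_diff {M N : ℕ} (hM : 1 ≤ M) (hN : 2 ≤ N) :
    quotientSet (LL1 M \ LL2 N)
      = (fun p : ℕ × ℕ => Fq M p.1 \ Gq N p.2) '' ↑(Finset.Iic M ×ˢ Finset.Iic (N+1)) := by
  ext K
  constructor
  · rintro ⟨w, hw, rfl⟩
    rw [alph_diff hM hN] at hw
    obtain ⟨s, t, hs, ht, e1, e2, imp1, _⟩ := quot_pair M N w
    refine ⟨(s, t), by simp [imp1 hw, ht], ?_⟩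
    show Fq M s \ Gq N t = _
    rw [← e1, ← e2]; rfl
  · rintro ⟨⟨s, t⟩, hp, rfl⟩
    simp only [Finset.coe_product, Set.mem_prod, Finset.coe_Iic, Set.mem_Iic] at hp
    obtain ⟨w, _, hq1, hq2, hw1, _, _⟩ := reach M N s t (by omega) hp.2
    refine ⟨w, ?_, ?_⟩
    · intro a ha; rw [alph_diff hM hN]; exact hw1 hp.1 a ha
    · show Fq M s \ Gq N t = _
      rw [← hq1, ← hq2]; rfl

lemma qs_inter {M N : ℕ} (hM : 1 ≤ M) (hN : 1 ≤ N) :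
    quotientSet (LL1 M ⊓ LL2 N)
      = (fun p : ℕ × ℕ => Fq M p.1 ⊓ Gq N p.2) '' ↑(Finset.Iic M ×ˢ Finset.Iic N) := by
  ext K
  constructor
  · rintro ⟨w, hw, rfl⟩
    rw [alph_inter hM hN] at hw
    have hw1 : ∀ a ∈ w, a ∈ A1 := by
      intro a ha
      have := hw a ha; simp at this
      rcases this with rfl | rfl <;> simp [A1]
    have hw2 : ∀ a ∈ w, a ∈ A2 := by
      intro a ha
      have := hw a ha; simp at this
      rcases this with rfl | rfl <;> simp [A2]
    obtain ⟨s, t, hs, ht, e1, e2, imp1, imp2⟩ := quot_pair M N w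
    refine ⟨(s, t), by simp [imp1 hw1, imp2 hw2], ?_⟩
    show Fq M s ⊓ Gq N t = _
    rw [← e1, ← e2]; rfl
  · rintro ⟨⟨s, t⟩, hp, rfl⟩
    simp only [Finset.coe_product, Set.mem_prod, Finset.coe_Iic, Set.mem_Iic] at hp
    obtain ⟨w, _, hq1, hq2, _, _, hw01⟩ := reach M N s t (by omega) (by omega)
    refine ⟨w, ?_, ?_⟩
    · intro a ha; rw [alph_inter hM hN]; exact hw01 hp.1 hp.2 a ha
    · show Fq M s ⊓ Gq N t = _
      rw [← hq1, ← hq2]; rfl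

-- injectivity
lemma inj1 (M : ℕ) : Set.InjOn (Fq M) ↑(Finset.Iic M) := by
  intro s hs s' hs' hE
  simp only [Finset.coe_Iic, Set.mem_Iic] at hs hs'
  have h : ∀ x, x ∈ Fq M s ↔ x ∈ Fq M s' := fun x => by rw [hE]
  refine keyN M s s' (by omega) (by omega) fun i => ?_
  exact (memFq_x M s i).symm.trans ((h _).trans (memFq_x M s' i))

lemma inj2 (N : ℕ) : Set.InjOn (Gq N) ↑(Finset.Iic N) := by
  intro t ht t' ht' hE
  simp only [Finset.coe_Iic, Set.mem_Iic] at ht ht'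
  have h : ∀ x, x ∈ Gq N t ↔ x ∈ Gq N t' := fun x => by rw [hE]
  refine keyN N t t' (by omega) (by omega) fun j => ?_
  exact (memGq_y N t j).symm.trans ((h _).trans (memGq_y N t' j))

lemma inj_union (M N : ℕ) :
    Set.InjOn (fun p : ℕ × ℕ => Fq M p.1 ⊔ Gq N p.2)
      ↑(Finset.Iic (M+1) ×ˢ Finset.Iic (N+1)) := by
  rintro ⟨s, t⟩ hst ⟨s', t'⟩ hst' hE
  simp only [Finset.coe_product, Set.mem_prod, Finset.coe_Iic, Set.mem_Iic] at hst hst'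
  have hE' : Fq M s ⊔ Gq N t = Fq M s' ⊔ Gq N t' := hE
  have h : ∀ x, x ∈ Fq M s ⊔ Gq N t ↔ x ∈ Fq M s' ⊔ Gq N t' := fun x => by rw [hE']
  have hs : s = s' := by
    refine keyN M s s' hst.1 hst'.1 fun i => ?_
    have e1 : (List.replicate i (0:Fin 5) ++ [2]) ∈ Fq M s ⊔ Gq N t ↔ (s ≤ M ∧ s ≤ i) := by
      rw [mem_sup', memFq_x, or_iff_left (not_memGq_x N t i)]
    have e2 : (List.replicate i (0:Fin 5) ++ [2]) ∈ Fq M s' ⊔ Gq N t' ↔ (s' ≤ M ∧ s' ≤ i) := by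
      rw [mem_sup', memFq_x, or_iff_left (not_memGq_x N t' i)]
    exact e1.symm.trans ((h _).trans e2)
  have ht : t = t' := by
    refine keyN N t t' hst.2 hst'.2 fun j => ?_
    have e1 : (List.replicate j (1:Fin 5) ++ [3]) ∈ Fq M s ⊔ Gq N t ↔ (t ≤ N ∧ t ≤ j) := by
      rw [mem_sup', memGq_y, or_iff_right (not_memFq_y M s j)]
    have e2 : (List.replicate j (1:Fin 5) ++ [3]) ∈ Fq M s' ⊔ Gq N t' ↔ (t' ≤ N ∧ t' ≤ j) := by
      rw [mem_sup', memGq_y, or_iff_right (not_memFq_y M s' j)]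
    exact e1.symm.trans ((h _).trans e2)
  simp [hs, ht]

lemma inj_symdiff (M N : ℕ) :
    Set.InjOn (fun p : ℕ × ℕ => (Fq M p.1 \ Gq N p.2) ⊔ (Gq N p.2 \ Fq M p.1))
      ↑(Finset.Iic (M+1) ×ˢ Finset.Iic (N+1)) := by
  rintro ⟨s, t⟩ hst ⟨s', t'⟩ hst' hE
  simp only [Finset.coe_product, Set.mem_prod, Finset.coe_Iic, Set.mem_Iic] at hst hst'
  have hE' : (Fq M s \ Gq N t) ⊔ (Gq N t \ Fq M s)
      = (Fq M s' \ Gq N t') ⊔ (Gq N t' \ Fq M s') := hE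
  have h : ∀ x, x ∈ (Fq M s \ Gq N t) ⊔ (Gq N t \ Fq M s)
      ↔ x ∈ (Fq M s' \ Gq N t') ⊔ (Gq N t' \ Fq M s') := fun x => by rw [hE']
  have hs : s = s' := by
    refine keyN M s s' hst.1 hst'.1 fun i => ?_
    have e1 : (List.replicate i (0:Fin 5) ++ [2]) ∈ (Fq M s \ Gq N t) ⊔ (Gq N t \ Fq M s)
        ↔ (s ≤ M ∧ s ≤ i) := by
      rw [mem_sup', mem_sdiff', mem_sdiff', memFq_x]
      have := not_memGq_x N t i; tauto
    have e2 : (List.replicate i (0:Fin 5) ++ [2]) ∈ (Fq M s' \ Gq N t') ⊔ (Gq N t' \ Fq M s')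
        ↔ (s' ≤ M ∧ s' ≤ i) := by
      rw [mem_sup', mem_sdiff', mem_sdiff', memFq_x]
      have := not_memGq_x N t' i; tauto
    exact e1.symm.trans ((h _).trans e2)
  have ht : t = t' := by
    refine keyN N t t' hst.2 hst'.2 fun j => ?_
    have e1 : (List.replicate j (1:Fin 5) ++ [3]) ∈ (Fq M s \ Gq N t) ⊔ (Gq N t \ Fq M s)
        ↔ (t ≤ N ∧ t ≤ j) := by
      rw [mem_sup', mem_sdiff', mem_sdiff', memGq_y]
      have := not_memFq_y M s j; tauto
    have e2 : (List.replicate j (1:Fin 5) ++ [3]) ∈ (Fq M s' \ Gq N t') ⊔ (Gq N t' \ Fq M s')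
        ↔ (t' ≤ N ∧ t' ≤ j) := by
      rw [mem_sup', mem_sdiff', mem_sdiff', memGq_y]
      have := not_memFq_y M s' j; tauto
    exact e1.symm.trans ((h _).trans e2)
  simp [hs, ht]

lemma inj_diff (M N : ℕ) :
    Set.InjOn (fun p : ℕ × ℕ => Fq M p.1 \ Gq N p.2)
      ↑(Finset.Iic M ×ˢ Finset.Iic (N+1)) := by
  rintro ⟨s, t⟩ hst ⟨s', t'⟩ hst' hE
  simp only [Finset.coe_product, Set.mem_prod, Finset.coe_Iic, Set.mem_Iic] at hst hst'
  have hE' : Fq M s \ Gq N t = Fq M s' \ Gq N t' := hE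
  have h : ∀ x, x ∈ Fq M s \ Gq N t ↔ x ∈ Fq M s' \ Gq N t' := fun x => by rw [hE']
  have hs : s = s' := by
    refine keyN M s s' (by omega) (by omega) fun i => ?_
    have e1 : (List.replicate i (0:Fin 5) ++ [2]) ∈ Fq M s \ Gq N t ↔ (s ≤ M ∧ s ≤ i) := by
      rw [mem_sdiff', memFq_x]
      have := not_memGq_x N t i; tauto
    have e2 : (List.replicate i (0:Fin 5) ++ [2]) ∈ Fq M s' \ Gq N t' ↔ (s' ≤ M ∧ s' ≤ i) := by
      rw [mem_sdiff', memFq_x]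
      have := not_memGq_x N t' i; tauto
    exact e1.symm.trans ((h _).trans e2)
  have ht : t = t' := by
    refine keyN N t t' hst.2 hst'.2 fun j => ?_
    rw [← not_iff_not]
    have e1 : (List.replicate M (0:Fin 5) ++ List.replicate j 1) ∈ Fq M s \ Gq N t
        ↔ ¬(t ≤ N ∧ t ≤ j) := by
      rw [mem_sdiff', memFq_u, memGq_u]
      have h1 : s ≤ M ∧ s ≤ M := ⟨hst.1, hst.1⟩
      tauto
    have e2 : (List.replicate M (0:Fin 5) ++ List.replicate j 1) ∈ Fq M s' \ Gq N t'
        ↔ ¬(t' ≤ N ∧ t' ≤ j) := by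
      rw [mem_sdiff', memFq_u, memGq_u]
      have h1 : s' ≤ M ∧ s' ≤ M := ⟨hst'.1, hst'.1⟩
      tauto
    exact e1.symm.trans ((h _).trans e2)
  simp [hs, ht]

lemma inj_inter (M N : ℕ) :
    Set.InjOn (fun p : ℕ × ℕ => Fq M p.1 ⊓ Gq N p.2)
      ↑(Finset.Iic M ×ˢ Finset.Iic N) := by
  rintro ⟨s, t⟩ hst ⟨s', t'⟩ hst' hE
  simp only [Finset.coe_product, Set.mem_prod, Finset.coe_Iic, Set.mem_Iic] at hst hst'
  have hE' : Fq M s ⊓ Gq N t = Fq M s' ⊓ Gq N t' := hE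
  have h : ∀ x, x ∈ Fq M s ⊓ Gq N t ↔ x ∈ Fq M s' ⊓ Gq N t' := fun x => by rw [hE']
  have h1 := (h (List.replicate s' (0:Fin 5) ++ List.replicate t' 1)).mpr
  have h2 := (h (List.replicate s (0:Fin 5) ++ List.replicate t 1)).mp
  rw [mem_inf', mem_inf', memFq_u, memFq_u, memGq_u, memGq_u] at h1 h2
  have ha := h1 ⟨⟨hst'.1, le_rfl⟩, ⟨hst'.2, le_rfl⟩⟩
  have hb := h2 ⟨⟨hst.1, le_rfl⟩, ⟨hst.2, le_rfl⟩⟩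
  have : s = s' ∧ t = t' := by omega
  simp [this.1, this.2]

end LIBT

/-- left ideals meeting the unrestricted bounds for the boolean
operations: `(m+1)(n+1)` for union and symmetric difference, `m·n + m` for
difference, and `m·n` for intersection. -/
theorem left_ideal_boolean_tight (m n : ℕ) (hm : 4 ≤ m) (hn : 4 ≤ n) :
    (∃ L' L : Language (Fin 5), IsLeftIdeal L' ∧ IsLeftIdeal L ∧
      (alphabetOf L' \ alphabetOf L).Nonempty ∧
      (alphabetOf L \ alphabetOf L').Nonempty ∧
      HasComplexity L' m ∧ HasComplexity L n ∧
      HasComplexity (L' ⊔ L) ((m + 1) * (n + 1)) ∧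
      HasComplexity ((L' \ L) ⊔ (L \ L')) ((m + 1) * (n + 1))) ∧
    (∃ L' L : Language (Fin 5), IsLeftIdeal L' ∧ IsLeftIdeal L ∧
      (alphabetOf L' \ alphabetOf L).Nonempty ∧
      HasComplexity L' m ∧ HasComplexity L n ∧
      HasComplexity (L' \ L) (m * n + m)) ∧
    (∃ L' L : Language (Fin 5), IsLeftIdeal L' ∧ IsLeftIdeal L ∧
      HasComplexity L' m ∧ HasComplexity L n ∧
      HasComplexity (L' ⊓ L) (m * n)) := by
  obtain ⟨M, rfl, hM⟩ : ∃ M, m = M + 1 ∧ 3 ≤ M := ⟨m - 1, by omega, by omega⟩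
  obtain ⟨N, rfl, hN⟩ : ∃ N, n = N + 1 ∧ 3 ≤ N := ⟨n - 1, by omega, by omega⟩
  have hM1 : 1 ≤ M := by omega
  have hN1 : 1 ≤ N := by omega
  have hc1 : HasComplexity (LIBT.LL1 M) (M + 1) := by
    simpa using LIBT.complexity_of_image _ _ _ (LIBT.qs1 hM1) (LIBT.inj1 M)
  have hc2 : HasComplexity (LIBT.LL2 N) (N + 1) := by
    simpa using LIBT.complexity_of_image _ _ _ (LIBT.qs2 hN1) (LIBT.inj2 N)
  have hcU : HasComplexity (LIBT.LL1 M ⊔ LIBT.LL2 N) ((M + 1 + 1) * (N + 1 + 1)) := by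
    have h := LIBT.complexity_of_image _ _ _ (LIBT.qs_union hM1 hN1) (LIBT.inj_union M N)
    have e : (Finset.Iic (M+1) ×ˢ Finset.Iic (N+1)).card = (M + 1 + 1) * (N + 1 + 1) := by
      simp
    rwa [e] at h
  have hcS : HasComplexity ((LIBT.LL1 M \ LIBT.LL2 N) ⊔ (LIBT.LL2 N \ LIBT.LL1 M))
      ((M + 1 + 1) * (N + 1 + 1)) := by
    have h := LIBT.complexity_of_image _ _ _ (LIBT.qs_symdiff hM1 hN1) (LIBT.inj_symdiff M N)
    have e : (Finset.Iic (M+1) ×ˢ Finset.Iic (N+1)).card = (M + 1 + 1) * (N + 1 + 1) := by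
      simp
    rwa [e] at h
  have hcD : HasComplexity (LIBT.LL1 M \ LIBT.LL2 N) ((M + 1) * (N + 1) + (M + 1)) := by
    have h := LIBT.complexity_of_image _ _ _ (LIBT.qs_diff hM1 (by omega)) (LIBT.inj_diff M N)
    have e : (Finset.Iic M ×ˢ Finset.Iic (N+1)).card = (M + 1) * (N + 1) + (M + 1) := by
      simp; ring
    rwa [e] at h
  have hcI : HasComplexity (LIBT.LL1 M ⊓ LIBT.LL2 N) ((M + 1) * (N + 1)) := by
    have h := LIBT.complexity_of_image _ _ _ (LIBT.qs_inter hM1 hN1) (LIBT.inj_inter M N)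
    have e : (Finset.Iic M ×ˢ Finset.Iic N).card = (M + 1) * (N + 1) := by simp
    rwa [e] at h
  have hne1 : (alphabetOf (LIBT.LL1 M) \ alphabetOf (LIBT.LL2 N)).Nonempty := by
    refine ⟨2, ?_⟩
    rw [LIBT.alph1 hM1, LIBT.alph2 hN1]
    exact ⟨by simp [LIBT.A1], by simp [LIBT.A2]⟩
  have hne2 : (alphabetOf (LIBT.LL2 N) \ alphabetOf (LIBT.LL1 M)).Nonempty := by
    refine ⟨3, ?_⟩
    rw [LIBT.alph1 hM1, LIBT.alph2 hN1]
    exact ⟨by simp [LIBT.A2], by simp [LIBT.A1]⟩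
  refine ⟨⟨LIBT.LL1 M, LIBT.LL2 N, LIBT.li1 hM1, LIBT.li2 hN1, hne1, hne2, hc1, hc2, hcU, hcS⟩,
    ⟨LIBT.LL1 M, LIBT.LL2 N, LIBT.li1 hM1, LIBT.li2 hN1, hne1, hc1, hc2, hcD⟩,
    ⟨LIBT.LL1 M, LIBT.LL2 N, LIBT.li1 hM1, LIBT.li2 hN1, hc1, hc2, hcI⟩⟩
end
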